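/- arXiv:2003.06375 — 8 statements merged into one kernel-verified Lean document; each statement's English description precedes it below -/
import Mathlib

section
/- Let B and C be bicategories, let F, G : B ⥤ C be pseudofunctors, and let η : F ⟶ G be a strong (pseudo)natural transformation. Suppose that for every object X of B the component η_X : F X ⟶ G X is an equivalence in C, i.e. there exist a 1-cell g_X : G X ⟶ F X and invertible 2-cells g_X ∘ η_X ≅ 𝟙_{F X} and η_X ∘ g_X ≅ 𝟙_{G X}. Then η is an equivalence in the bicategory of pseudofunctors from B to C (whose 1-cells are strong natural transformations and whose 2-cells are modifications): there exist a strong natural transformation θ : G ⟶ F and invertible modifications from the composite η followed by θ to the identity transformation of F, and from the composite θ followed by η to the identity transformation of G. -/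
open CategoryTheory CategoryTheory.Bicategory

universe w₁ w₂ v₁ v₂ u₁ u₂

open CategoryTheory.Oplax

namespace StrongPseudoInvAux

open CategoryTheory.Oplax

variable {B : Type u₁} [Bicategory.{w₁, v₁} B] {C : Type u₂} [Bicategory.{w₂, v₂} C]
  {F G : OplaxFunctor B C} (η : Oplax.StrongTrans F G)
  (g : ∀ X : B, G.obj X ⟶ F.obj X)
  (u : ∀ X : B, 𝟙 (F.obj X) ≅ η.app X ≫ g X)
  (c : ∀ X : B, g X ≫ η.app X ≅ 𝟙 (G.obj X))

/-- the mate 2-cell -/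
def mateHom {X Y : B} (f : X ⟶ Y) : G.map f ≫ g Y ⟶ g X ≫ F.map f :=
  𝟙 _ ⊗≫ (c X).inv ▷ (G.map f ≫ g Y) ⊗≫ g X ◁ ((η.naturality f).inv ▷ g Y) ⊗≫
    g X ◁ F.map f ◁ (u Y).inv ⊗≫ 𝟙 _

instance isIso_mateHom {X Y : B} (f : X ⟶ Y) : IsIso (mateHom η g u c f) := by
  dsimp only [mateHom, bicategoricalComp]
  infer_instance

theorem nat_inv {X Y : B} {f f' : X ⟶ Y} (β : f ⟶ f') :
    η.app X ◁ G.map₂ β ≫ (η.naturality f').inv = (η.naturality f).inv ≫ F.map₂ β ▷ η.app Y := by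
  rw [Iso.comp_inv_eq, Category.assoc, η.naturality_naturality, Iso.inv_hom_id_assoc]

theorem mate_naturality {X Y : B} {f f' : X ⟶ Y} (β : f ⟶ f') :
    G.map₂ β ▷ g Y ≫ mateHom η g u c f' = mateHom η g u c f ≫ g X ◁ F.map₂ β := by
  dsimp only [mateHom]
  calc G.map₂ β ▷ g Y ≫ (𝟙 _ ⊗≫ (c X).inv ▷ (G.map f' ≫ g Y) ⊗≫
          g X ◁ ((η.naturality f').inv ▷ g Y) ⊗≫ g X ◁ F.map f' ◁ (u Y).inv ⊗≫ 𝟙 _)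
      = 𝟙 _ ⊗≫ (𝟙 (G.obj X) ◁ (G.map₂ β ▷ g Y) ≫ (c X).inv ▷ (G.map f' ≫ g Y)) ⊗≫
          g X ◁ ((η.naturality f').inv ▷ g Y) ⊗≫ g X ◁ F.map f' ◁ (u Y).inv ⊗≫ 𝟙 _ := by
        bicategory
    _ = 𝟙 _ ⊗≫ (c X).inv ▷ (G.map f ≫ g Y) ⊗≫
          g X ◁ ((η.app X ◁ G.map₂ β ≫ (η.naturality f').inv) ▷ g Y) ⊗≫
          g X ◁ F.map f' ◁ (u Y).inv ⊗≫ 𝟙 _ := by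
        rw [whisker_exchange]; bicategory
    _ = 𝟙 _ ⊗≫ (c X).inv ▷ (G.map f ≫ g Y) ⊗≫ g X ◁ ((η.naturality f).inv ▷ g Y) ⊗≫
          g X ◁ (F.map₂ β ▷ (η.app Y ≫ g Y) ≫ F.map f' ◁ (u Y).inv) ⊗≫ 𝟙 _ := by
        rw [nat_inv]; bicategory
    _ = 𝟙 _ ⊗≫ (c X).inv ▷ (G.map f ≫ g Y) ⊗≫ g X ◁ ((η.naturality f).inv ▷ g Y) ⊗≫
          g X ◁ (F.map f ◁ (u Y).inv ≫ F.map₂ β ▷ 𝟙 (F.obj Y)) ⊗≫ 𝟙 _ := by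
        rw [← whisker_exchange]
    _ = (𝟙 _ ⊗≫ (c X).inv ▷ (G.map f ≫ g Y) ⊗≫ g X ◁ ((η.naturality f).inv ▷ g Y) ⊗≫
          g X ◁ F.map f ◁ (u Y).inv ⊗≫ 𝟙 _) ≫ g X ◁ F.map₂ β := by
        bicategory

theorem hr_inv {X : B}
    (hr : rightZigzag (u X).hom (c X).hom = (ρ_ (g X)).hom ≫ (λ_ (g X)).inv) :
    (c X).inv ▷ g X ⊗≫ g X ◁ (u X).inv = (λ_ (g X)).hom ≫ (ρ_ (g X)).inv := by
  rw [← cancel_epi (rightZigzag (u X).hom (c X).hom)]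
  calc rightZigzag (u X).hom (c X).hom ≫ ((c X).inv ▷ g X ⊗≫ g X ◁ (u X).inv)
      = 𝟙 _ ⊗≫ g X ◁ (u X).hom ⊗≫ ((c X).hom ≫ (c X).inv) ▷ g X ⊗≫ g X ◁ (u X).inv ⊗≫ 𝟙 _ := by
        dsimp only [rightZigzag]; bicategory
    _ = 𝟙 _ ⊗≫ g X ◁ ((u X).hom ≫ (u X).inv) ⊗≫ 𝟙 _ := by
        rw [Iso.hom_inv_id, id_whiskerRight]; bicategory
    _ = rightZigzag (u X).hom (c X).hom ≫ ((λ_ (g X)).hom ≫ (ρ_ (g X)).inv) := by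
        rw [Iso.hom_inv_id, hr]; bicategory

theorem nat_id_inv (X : B) :
    (η.naturality (𝟙 X)).inv ≫ F.mapId X ▷ η.app X =
      η.app X ◁ G.mapId X ≫ (ρ_ (η.app X)).hom ≫ (λ_ (η.app X)).inv := by
  rw [Iso.inv_comp_eq, η.naturality_id_assoc]
  simp

theorem mate_id (X : B)
    (hr : rightZigzag (u X).hom (c X).hom = (ρ_ (g X)).hom ≫ (λ_ (g X)).inv) :
    mateHom η g u c (𝟙 X) ≫ g X ◁ F.mapId X =
      G.mapId X ▷ g X ≫ (λ_ (g X)).hom ≫ (ρ_ (g X)).inv := by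
  calc mateHom η g u c (𝟙 X) ≫ g X ◁ F.mapId X
      = 𝟙 _ ⊗≫ (c X).inv ▷ (G.map (𝟙 X) ≫ g X) ⊗≫
          g X ◁ ((η.naturality (𝟙 X)).inv ▷ g X) ⊗≫
          g X ◁ (F.map (𝟙 X) ◁ (u X).inv ≫ F.mapId X ▷ 𝟙 (F.obj X)) ⊗≫ 𝟙 _ := by
        dsimp only [mateHom]; bicategory
    _ = 𝟙 _ ⊗≫ (c X).inv ▷ (G.map (𝟙 X) ≫ g X) ⊗≫
          g X ◁ (((η.naturality (𝟙 X)).inv ≫ F.mapId X ▷ η.app X) ▷ g X) ⊗≫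
          g X ◁ (u X).inv ⊗≫ 𝟙 _ := by
        rw [whisker_exchange]; bicategory
    _ = 𝟙 _ ⊗≫ (𝟙 (G.obj X) ◁ (G.mapId X ▷ g X) ≫ (c X).inv ▷ (𝟙 (G.obj X) ≫ g X)) ⊗≫
          g X ◁ (u X).inv ⊗≫ 𝟙 _ := by
        rw [nat_id_inv, whisker_exchange]; bicategory
    _ = G.mapId X ▷ g X ≫ (𝟙 _ ⊗≫ ((c X).inv ▷ g X ⊗≫ g X ◁ (u X).inv) ⊗≫ 𝟙 _) := by
        bicategory
    _ = G.mapId X ▷ g X ≫ (λ_ (g X)).hom ≫ (ρ_ (g X)).inv := by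
        rw [hr_inv η g u c hr]; bicategory

theorem hl_inv {X : B}
    (hl : leftZigzag (u X).hom (c X).hom = (λ_ (η.app X)).hom ≫ (ρ_ (η.app X)).inv) :
    η.app X ◁ (c X).inv ⊗≫ (u X).inv ▷ η.app X
    = (ρ_ (η.app X)).hom ≫ (λ_ (η.app X)).inv := by
  rw [← cancel_epi (leftZigzag (u X).hom (c X).hom)]
  calc leftZigzag (u X).hom (c X).hom ≫ (η.app X ◁ (c X).inv ⊗≫ (u X).inv ▷ η.app X)
      = 𝟙 _ ⊗≫ (u X).hom ▷ η.app X ⊗≫ η.app X ◁ ((c X).hom ≫ (c X).inv) ⊗≫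
          (u X).inv ▷ η.app X ⊗≫ 𝟙 _ := by
        dsimp only [leftZigzag]; bicategory
    _ = 𝟙 _ ⊗≫ ((u X).hom ≫ (u X).inv) ▷ η.app X ⊗≫ 𝟙 _ := by
        rw [Iso.hom_inv_id, Bicategory.whiskerLeft_id]; bicategory
    _ = leftZigzag (u X).hom (c X).hom ≫ ((ρ_ (η.app X)).hom ≫ (λ_ (η.app X)).inv) := by
        rw [Iso.hom_inv_id, hl]; bicategory

theorem u_push {X : B}
    (hl : leftZigzag (u X).hom (c X).hom = (λ_ (η.app X)).hom ≫ (ρ_ (η.app X)).inv) :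
    (u X).inv ▷ η.app X = 𝟙 _ ⊗≫ η.app X ◁ (c X).hom ⊗≫ 𝟙 _ := by
  rw [← cancel_epi ((u X).hom ▷ η.app X)]
  calc (u X).hom ▷ η.app X ≫ (u X).inv ▷ η.app X
      = ((u X).hom ≫ (u X).inv) ▷ η.app X := by rw [comp_whiskerRight]
    _ = 𝟙 _ := by rw [Iso.hom_inv_id, id_whiskerRight]
    _ = leftZigzag (u X).hom (c X).hom ⊗≫ 𝟙 _ := by rw [hl]; bicategory
    _ = (u X).hom ▷ η.app X ≫ (𝟙 _ ⊗≫ η.app X ◁ (c X).hom ⊗≫ 𝟙 _) := by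
        dsimp only [leftZigzag]; bicategory

theorem nat_comp_inv {X Y Z : B} (f : X ⟶ Y) (h : Y ⟶ Z) :
    (η.naturality (f ≫ h)).inv ≫ F.mapComp f h ▷ η.app Z =
      𝟙 _ ⊗≫ η.app X ◁ G.mapComp f h ⊗≫ (η.naturality f).inv ▷ G.map h ⊗≫
        F.map f ◁ (η.naturality h).inv ⊗≫ 𝟙 _ := by
  rw [Iso.inv_comp_eq]
  symm
  calc (η.naturality (f ≫ h)).hom ≫ (𝟙 _ ⊗≫ η.app X ◁ G.mapComp f h ⊗≫
          (η.naturality f).inv ▷ G.map h ⊗≫ F.map f ◁ (η.naturality h).inv ⊗≫ 𝟙 _)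
      = 𝟙 _ ⊗≫ ((η.naturality (f ≫ h)).hom ≫ η.app X ◁ G.mapComp f h) ⊗≫
          (η.naturality f).inv ▷ G.map h ⊗≫ F.map f ◁ (η.naturality h).inv ⊗≫ 𝟙 _ := by
        bicategory
    _ = 𝟙 _ ⊗≫ F.mapComp f h ▷ η.app Z ⊗≫ F.map f ◁ (η.naturality h).hom ⊗≫
          (((η.naturality f).hom ≫ (η.naturality f).inv) ▷ G.map h) ⊗≫
          F.map f ◁ (η.naturality h).inv ⊗≫ 𝟙 _ := by
        rw [η.naturality_comp]; bicategory
    _ = 𝟙 _ ⊗≫ F.mapComp f h ▷ η.app Z ⊗≫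
          F.map f ◁ ((η.naturality h).hom ≫ (η.naturality h).inv) ⊗≫ 𝟙 _ := by
        rw [Iso.hom_inv_id, id_whiskerRight]; bicategory
    _ = F.mapComp f h ▷ η.app Z := by
        rw [Iso.hom_inv_id, Bicategory.whiskerLeft_id]; bicategory

set_option maxHeartbeats 1600000 in
theorem mate_comp {X Y Z : B}
    (hlY : leftZigzag (u Y).hom (c Y).hom = (λ_ (η.app Y)).hom ≫ (ρ_ (η.app Y)).inv)
    (f : X ⟶ Y) (h : Y ⟶ Z) :
    mateHom η g u c (f ≫ h) ≫ g X ◁ F.mapComp f h =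
      G.mapComp f h ▷ g Z ≫ (α_ _ _ _).hom ≫ G.map f ◁ mateHom η g u c h ≫
        (α_ _ _ _).inv ≫ mateHom η g u c f ▷ F.map h ≫ (α_ _ _ _).hom := by
  have e1 : mateHom η g u c (f ≫ h) ≫ g X ◁ F.mapComp f h =
      𝟙 _ ⊗≫ (𝟙 (G.obj X) ◁ (G.mapComp f h ▷ g Z) ≫
          (c X).inv ▷ ((G.map f ≫ G.map h) ≫ g Z)) ⊗≫
        g X ◁ ((η.naturality f).inv ▷ (G.map h ≫ g Z)) ⊗≫
        g X ◁ (F.map f ◁ ((η.naturality h).inv ▷ g Z)) ⊗≫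
        g X ◁ (F.map f ◁ (F.map h ◁ (u Z).inv)) ⊗≫ 𝟙 _ := by
    calc mateHom η g u c (f ≫ h) ≫ g X ◁ F.mapComp f h
        = 𝟙 _ ⊗≫ (c X).inv ▷ (G.map (f ≫ h) ≫ g Z) ⊗≫
            g X ◁ ((η.naturality (f ≫ h)).inv ▷ g Z) ⊗≫
            g X ◁ (F.map (f ≫ h) ◁ (u Z).inv ≫ F.mapComp f h ▷ 𝟙 (F.obj Z)) ⊗≫ 𝟙 _ := by
          dsimp only [mateHom]; bicategory
      _ = 𝟙 _ ⊗≫ (c X).inv ▷ (G.map (f ≫ h) ≫ g Z) ⊗≫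
            g X ◁ (((η.naturality (f ≫ h)).inv ≫ F.mapComp f h ▷ η.app Z) ▷ g Z) ⊗≫
            g X ◁ ((F.map f ≫ F.map h) ◁ (u Z).inv) ⊗≫ 𝟙 _ := by
          rw [whisker_exchange]; bicategory
      _ = 𝟙 _ ⊗≫ (c X).inv ▷ (G.map (f ≫ h) ≫ g Z) ⊗≫
            g X ◁ ((η.app X ◁ G.mapComp f h) ▷ g Z) ⊗≫
            g X ◁ (((η.naturality f).inv ▷ G.map h) ▷ g Z) ⊗≫
            g X ◁ ((F.map f ◁ (η.naturality h).inv) ▷ g Z) ⊗≫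
            g X ◁ ((F.map f ≫ F.map h) ◁ (u Z).inv) ⊗≫ 𝟙 _ := by
          rw [nat_comp_inv]; bicategory
      _ = 𝟙 _ ⊗≫ (𝟙 (G.obj X) ◁ (G.mapComp f h ▷ g Z) ≫
            (c X).inv ▷ ((G.map f ≫ G.map h) ≫ g Z)) ⊗≫
          g X ◁ ((η.naturality f).inv ▷ (G.map h ≫ g Z)) ⊗≫
          g X ◁ (F.map f ◁ ((η.naturality h).inv ▷ g Z)) ⊗≫
          g X ◁ (F.map f ◁ (F.map h ◁ (u Z).inv)) ⊗≫ 𝟙 _ := by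
          rw [whisker_exchange]; bicategory
  have e2 : G.mapComp f h ▷ g Z ≫ (α_ _ _ _).hom ≫ G.map f ◁ mateHom η g u c h ≫
        (α_ _ _ _).inv ≫ mateHom η g u c f ▷ F.map h ≫ (α_ _ _ _).hom =
      𝟙 _ ⊗≫ (𝟙 (G.obj X) ◁ (G.mapComp f h ▷ g Z) ≫
          (c X).inv ▷ ((G.map f ≫ G.map h) ≫ g Z)) ⊗≫
        g X ◁ ((η.naturality f).inv ▷ (G.map h ≫ g Z)) ⊗≫
        g X ◁ (F.map f ◁ ((η.naturality h).inv ▷ g Z)) ⊗≫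
        g X ◁ (F.map f ◁ (F.map h ◁ (u Z).inv)) ⊗≫ 𝟙 _ := by
    calc G.mapComp f h ▷ g Z ≫ (α_ _ _ _).hom ≫ G.map f ◁ mateHom η g u c h ≫
          (α_ _ _ _).inv ≫ mateHom η g u c f ▷ F.map h ≫ (α_ _ _ _).hom
        = 𝟙 _ ⊗≫ G.mapComp f h ▷ g Z ⊗≫
            G.map f ◁ ((c Y).inv ▷ (G.map h ≫ g Z)) ⊗≫
            G.map f ◁ (g Y ◁ ((η.naturality h).inv ▷ g Z)) ⊗≫
            G.map f ◁ (g Y ◁ (F.map h ◁ (u Z).inv)) ⊗≫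
            ((c X).inv ▷ (G.map f ≫ g Y)) ▷ F.map h ⊗≫
            (g X ◁ ((η.naturality f).inv ▷ g Y)) ▷ F.map h ⊗≫
            (g X ◁ (F.map f ◁ (u Y).inv)) ▷ F.map h ⊗≫ 𝟙 _ := by
          dsimp only [mateHom]; bicategory
      _ = 𝟙 _ ⊗≫ G.mapComp f h ▷ g Z ⊗≫
            G.map f ◁ ((c Y).inv ▷ (G.map h ≫ g Z)) ⊗≫
            G.map f ◁ (g Y ◁ ((η.naturality h).inv ▷ g Z)) ⊗≫
            ((c X).inv ▷ (G.map f ≫ g Y ≫ F.map h ≫ η.app Z ≫ g Z) ≫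
              (g X ≫ η.app X) ◁ (G.map f ◁ (g Y ◁ (F.map h ◁ (u Z).inv)))) ⊗≫
            (g X ◁ ((η.naturality f).inv ▷ g Y)) ▷ F.map h ⊗≫
            (g X ◁ (F.map f ◁ (u Y).inv)) ▷ F.map h ⊗≫ 𝟙 _ := by
          rw [← whisker_exchange (c X).inv (G.map f ◁ (g Y ◁ (F.map h ◁ (u Z).inv)))]; bicategory
      _ = 𝟙 _ ⊗≫ G.mapComp f h ▷ g Z ⊗≫
            G.map f ◁ ((c Y).inv ▷ (G.map h ≫ g Z)) ⊗≫
            ((c X).inv ▷ (G.map f ≫ g Y ≫ (η.app Y ≫ G.map h) ≫ g Z) ≫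
              (g X ≫ η.app X) ◁ (G.map f ◁ (g Y ◁ ((η.naturality h).inv ▷ g Z)))) ⊗≫
            g X ◁ (η.app X ◁ (G.map f ◁ (g Y ◁ (F.map h ◁ (u Z).inv)))) ⊗≫
            (g X ◁ ((η.naturality f).inv ▷ g Y)) ▷ F.map h ⊗≫
            (g X ◁ (F.map f ◁ (u Y).inv)) ▷ F.map h ⊗≫ 𝟙 _ := by
          rw [← whisker_exchange (c X).inv (G.map f ◁ (g Y ◁ ((η.naturality h).inv ▷ g Z)))]; bicategory
      _ = 𝟙 _ ⊗≫ G.mapComp f h ▷ g Z ⊗≫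
            ((c X).inv ▷ (G.map f ≫ 𝟙 (G.obj Y) ≫ G.map h ≫ g Z) ≫
              (g X ≫ η.app X) ◁ (G.map f ◁ ((c Y).inv ▷ (G.map h ≫ g Z)))) ⊗≫
            g X ◁ (η.app X ◁ (G.map f ◁ (g Y ◁ ((η.naturality h).inv ▷ g Z)))) ⊗≫
            g X ◁ (η.app X ◁ (G.map f ◁ (g Y ◁ (F.map h ◁ (u Z).inv)))) ⊗≫
            (g X ◁ ((η.naturality f).inv ▷ g Y)) ▷ F.map h ⊗≫
            (g X ◁ (F.map f ◁ (u Y).inv)) ▷ F.map h ⊗≫ 𝟙 _ := by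
          rw [← whisker_exchange (c X).inv (G.map f ◁ ((c Y).inv ▷ (G.map h ≫ g Z)))]; bicategory
      _ = 𝟙 _ ⊗≫ G.mapComp f h ▷ g Z ⊗≫
            (c X).inv ▷ (G.map f ≫ 𝟙 (G.obj Y) ≫ G.map h ≫ g Z) ⊗≫
            g X ◁ (η.app X ◁ (G.map f ◁ ((c Y).inv ▷ (G.map h ≫ g Z)))) ⊗≫
            g X ◁ (η.app X ◁ (G.map f ◁ (g Y ◁ ((η.naturality h).inv ▷ g Z)))) ⊗≫
            g X ◁ (((η.naturality f).inv ▷ (g Y ≫ F.map h ≫ η.app Z ≫ g Z)) ≫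
              ((F.map f ≫ η.app Y) ◁ (g Y ◁ (F.map h ◁ (u Z).inv)))) ⊗≫
            (g X ◁ (F.map f ◁ (u Y).inv)) ▷ F.map h ⊗≫ 𝟙 _ := by
          rw [← whisker_exchange (η.naturality f).inv (g Y ◁ (F.map h ◁ (u Z).inv))]; bicategory
      _ = 𝟙 _ ⊗≫ G.mapComp f h ▷ g Z ⊗≫
            (c X).inv ▷ (G.map f ≫ 𝟙 (G.obj Y) ≫ G.map h ≫ g Z) ⊗≫
            g X ◁ (η.app X ◁ (G.map f ◁ ((c Y).inv ▷ (G.map h ≫ g Z)))) ⊗≫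
            g X ◁ (((η.naturality f).inv ▷ (g Y ≫ (η.app Y ≫ G.map h) ≫ g Z)) ≫
              ((F.map f ≫ η.app Y) ◁ (g Y ◁ ((η.naturality h).inv ▷ g Z)))) ⊗≫
            g X ◁ (F.map f ◁ (η.app Y ◁ (g Y ◁ (F.map h ◁ (u Z).inv)))) ⊗≫
            (g X ◁ (F.map f ◁ (u Y).inv)) ▷ F.map h ⊗≫ 𝟙 _ := by
          rw [← whisker_exchange (η.naturality f).inv (g Y ◁ ((η.naturality h).inv ▷ g Z))]; bicategory
      _ = 𝟙 _ ⊗≫ G.mapComp f h ▷ g Z ⊗≫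
            (c X).inv ▷ (G.map f ≫ 𝟙 (G.obj Y) ≫ G.map h ≫ g Z) ⊗≫
            g X ◁ (((η.naturality f).inv ▷ (𝟙 (G.obj Y) ≫ G.map h ≫ g Z)) ≫
              ((F.map f ≫ η.app Y) ◁ ((c Y).inv ▷ (G.map h ≫ g Z)))) ⊗≫
            g X ◁ (F.map f ◁ (η.app Y ◁ (g Y ◁ ((η.naturality h).inv ▷ g Z)))) ⊗≫
            g X ◁ (F.map f ◁ (η.app Y ◁ (g Y ◁ (F.map h ◁ (u Z).inv)))) ⊗≫
            (g X ◁ (F.map f ◁ (u Y).inv)) ▷ F.map h ⊗≫ 𝟙 _ := by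
          rw [← whisker_exchange (η.naturality f).inv ((c Y).inv ▷ (G.map h ≫ g Z))]; bicategory
      _ = 𝟙 _ ⊗≫ G.mapComp f h ▷ g Z ⊗≫
            (c X).inv ▷ (G.map f ≫ 𝟙 (G.obj Y) ≫ G.map h ≫ g Z) ⊗≫
            g X ◁ ((η.naturality f).inv ▷ (𝟙 (G.obj Y) ≫ G.map h ≫ g Z)) ⊗≫
            g X ◁ (F.map f ◁ (η.app Y ◁ ((c Y).inv ▷ (G.map h ≫ g Z)))) ⊗≫
            g X ◁ (F.map f ◁ (η.app Y ◁ (g Y ◁ ((η.naturality h).inv ▷ g Z)))) ⊗≫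
            g X ◁ (F.map f ◁ ((u Y).inv ▷ (F.map h ≫ η.app Z ≫ g Z) ≫
              𝟙 (F.obj Y) ◁ (F.map h ◁ (u Z).inv))) ⊗≫ 𝟙 _ := by
          rw [← whisker_exchange (u Y).inv (F.map h ◁ (u Z).inv)]; bicategory
      _ = 𝟙 _ ⊗≫ G.mapComp f h ▷ g Z ⊗≫
            (c X).inv ▷ (G.map f ≫ 𝟙 (G.obj Y) ≫ G.map h ≫ g Z) ⊗≫
            g X ◁ ((η.naturality f).inv ▷ (𝟙 (G.obj Y) ≫ G.map h ≫ g Z)) ⊗≫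
            g X ◁ (F.map f ◁ (η.app Y ◁ ((c Y).inv ▷ (G.map h ≫ g Z)))) ⊗≫
            g X ◁ (F.map f ◁ ((u Y).inv ▷ ((η.app Y ≫ G.map h) ≫ g Z) ≫
              𝟙 (F.obj Y) ◁ ((η.naturality h).inv ▷ g Z))) ⊗≫
            g X ◁ (F.map f ◁ (F.map h ◁ (u Z).inv)) ⊗≫ 𝟙 _ := by
          rw [← whisker_exchange (u Y).inv ((η.naturality h).inv ▷ g Z)]; bicategory
      _ = 𝟙 _ ⊗≫ G.mapComp f h ▷ g Z ⊗≫
            (c X).inv ▷ (G.map f ≫ 𝟙 (G.obj Y) ≫ G.map h ≫ g Z) ⊗≫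
            g X ◁ ((η.naturality f).inv ▷ (𝟙 (G.obj Y) ≫ G.map h ≫ g Z)) ⊗≫
            g X ◁ (F.map f ◁ ((η.app Y ◁ (c Y).inv ⊗≫ (u Y).inv ▷ η.app Y) ▷
              (G.map h ≫ g Z))) ⊗≫
            g X ◁ (F.map f ◁ ((η.naturality h).inv ▷ g Z)) ⊗≫
            g X ◁ (F.map f ◁ (F.map h ◁ (u Z).inv)) ⊗≫ 𝟙 _ := by
          bicategory
      _ = 𝟙 _ ⊗≫ (𝟙 (G.obj X) ◁ (G.mapComp f h ▷ g Z) ≫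
            (c X).inv ▷ ((G.map f ≫ G.map h) ≫ g Z)) ⊗≫
          g X ◁ ((η.naturality f).inv ▷ (G.map h ≫ g Z)) ⊗≫
          g X ◁ (F.map f ◁ ((η.naturality h).inv ▷ g Z)) ⊗≫
          g X ◁ (F.map f ◁ (F.map h ◁ (u Z).inv)) ⊗≫ 𝟙 _ := by
          rw [hl_inv η g u c hlY]; bicategory
  exact e1.trans e2.symm

set_option maxHeartbeats 800000 in
theorem counit_nat {a b : B}
    (hla : leftZigzag (u a).hom (c a).hom = (λ_ (η.app a)).hom ≫ (ρ_ (η.app a)).inv)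
    (f : a ⟶ b) :
    F.map f ◁ (u b).inv ≫ ((ρ_ (F.map f)).hom ≫ (λ_ (F.map f)).inv) =
      ((α_ (F.map f) (η.app b) (g b)).inv ≫ (η.naturality f).hom ▷ g b ≫
        (α_ (η.app a) (G.map f) (g b)).hom ≫ η.app a ◁ mateHom η g u c f ≫
        (α_ (η.app a) (g a) (F.map f)).inv) ≫ (u a).inv ▷ F.map f := by
  symm
  calc ((α_ (F.map f) (η.app b) (g b)).inv ≫ (η.naturality f).hom ▷ g b ≫
        (α_ (η.app a) (G.map f) (g b)).hom ≫ η.app a ◁ mateHom η g u c f ≫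
        (α_ (η.app a) (g a) (F.map f)).inv) ≫ (u a).inv ▷ F.map f
      = 𝟙 _ ⊗≫ (η.naturality f).hom ▷ g b ⊗≫
          η.app a ◁ ((c a).inv ▷ (G.map f ≫ g b)) ⊗≫
          (η.app a ≫ g a) ◁ ((η.naturality f).inv ▷ g b) ⊗≫
          (η.app a ≫ g a) ◁ (F.map f ◁ (u b).inv) ⊗≫
          (u a).inv ▷ F.map f ⊗≫ 𝟙 _ := by
        dsimp only [mateHom]; bicategory
    _ = 𝟙 _ ⊗≫ (η.naturality f).hom ▷ g b ⊗≫
          η.app a ◁ ((c a).inv ▷ (G.map f ≫ g b)) ⊗≫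
          (η.app a ≫ g a) ◁ ((η.naturality f).inv ▷ g b) ⊗≫
          ((u a).inv ▷ (F.map f ≫ η.app b ≫ g b) ≫
            𝟙 (F.obj a) ◁ (F.map f ◁ (u b).inv)) ⊗≫ 𝟙 _ := by
        rw [← whisker_exchange (u a).inv (F.map f ◁ (u b).inv)]; bicategory
    _ = 𝟙 _ ⊗≫ (η.naturality f).hom ▷ g b ⊗≫
          η.app a ◁ ((c a).inv ▷ (G.map f ≫ g b)) ⊗≫
          ((u a).inv ▷ ((η.app a ≫ G.map f) ≫ g b) ≫
            𝟙 (F.obj a) ◁ ((η.naturality f).inv ▷ g b)) ⊗≫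
          F.map f ◁ (u b).inv ⊗≫ 𝟙 _ := by
        rw [← whisker_exchange (u a).inv ((η.naturality f).inv ▷ g b)]; bicategory
    _ = 𝟙 _ ⊗≫ (η.naturality f).hom ▷ g b ⊗≫
          ((η.app a ◁ (c a).inv ⊗≫ (u a).inv ▷ η.app a) ▷ (G.map f ≫ g b)) ⊗≫
          (η.naturality f).inv ▷ g b ⊗≫ F.map f ◁ (u b).inv ⊗≫ 𝟙 _ := by
        bicategory
    _ = 𝟙 _ ⊗≫ (((η.naturality f).hom ≫ (η.naturality f).inv) ▷ g b) ⊗≫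
          F.map f ◁ (u b).inv ⊗≫ 𝟙 _ := by
        rw [hl_inv η g u c hla]; bicategory
    _ = F.map f ◁ (u b).inv ≫ ((ρ_ (F.map f)).hom ≫ (λ_ (F.map f)).inv) := by
        rw [Iso.hom_inv_id, id_whiskerRight]; bicategory

set_option maxHeartbeats 800000 in
theorem unit_nat {a b : B}
    (hlb : leftZigzag (u b).hom (c b).hom = (λ_ (η.app b)).hom ≫ (ρ_ (η.app b)).inv)
    (f : a ⟶ b) :
    G.map f ◁ (c b).hom ≫ ((ρ_ (G.map f)).hom ≫ (λ_ (G.map f)).inv) =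
      ((α_ (G.map f) (g b) (η.app b)).inv ≫ mateHom η g u c f ▷ η.app b ≫
        (α_ (g a) (F.map f) (η.app b)).hom ≫ g a ◁ (η.naturality f).hom ≫
        (α_ (g a) (η.app a) (G.map f)).inv) ≫ (c a).hom ▷ G.map f := by
  symm
  calc ((α_ (G.map f) (g b) (η.app b)).inv ≫ mateHom η g u c f ▷ η.app b ≫
        (α_ (g a) (F.map f) (η.app b)).hom ≫ g a ◁ (η.naturality f).hom ≫
        (α_ (g a) (η.app a) (G.map f)).inv) ≫ (c a).hom ▷ G.map f
      = 𝟙 _ ⊗≫ (c a).inv ▷ (G.map f ≫ g b ≫ η.app b) ⊗≫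
          g a ◁ ((η.naturality f).inv ▷ (g b ≫ η.app b)) ⊗≫
          g a ◁ (F.map f ◁ ((u b).inv ▷ η.app b)) ⊗≫
          g a ◁ (η.naturality f).hom ⊗≫ (c a).hom ▷ G.map f ⊗≫ 𝟙 _ := by
        dsimp only [mateHom]; bicategory
    _ = 𝟙 _ ⊗≫ (c a).inv ▷ (G.map f ≫ g b ≫ η.app b) ⊗≫
          g a ◁ ((η.naturality f).inv ▷ (g b ≫ η.app b)) ⊗≫
          g a ◁ ((F.map f ≫ η.app b) ◁ (c b).hom ≫ (η.naturality f).hom ▷ 𝟙 (G.obj b)) ⊗≫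
          (c a).hom ▷ G.map f ⊗≫ 𝟙 _ := by
        rw [u_push η g u c hlb]; bicategory
    _ = 𝟙 _ ⊗≫ (c a).inv ▷ (G.map f ≫ g b ≫ η.app b) ⊗≫
          g a ◁ ((((η.naturality f).inv ≫ (η.naturality f).hom) ▷ (g b ≫ η.app b))) ⊗≫
          g a ◁ ((η.app a ≫ G.map f) ◁ (c b).hom) ⊗≫
          (c a).hom ▷ G.map f ⊗≫ 𝟙 _ := by
        rw [whisker_exchange (η.naturality f).hom (c b).hom]; bicategory
    _ = 𝟙 _ ⊗≫ (𝟙 (G.obj a) ◁ (G.map f ◁ (c b).hom) ≫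
          (c a).inv ▷ (G.map f ≫ 𝟙 (G.obj b))) ⊗≫ (c a).hom ▷ G.map f ⊗≫ 𝟙 _ := by
        rw [Iso.inv_hom_id, id_whiskerRight,
          whisker_exchange (c a).inv (G.map f ◁ (c b).hom)]; bicategory
    _ = 𝟙 _ ⊗≫ G.map f ◁ (c b).hom ⊗≫
          (((c a).inv ≫ (c a).hom) ▷ G.map f) ⊗≫ 𝟙 _ := by
        bicategory
    _ = G.map f ◁ (c b).hom ≫ ((ρ_ (G.map f)).hom ≫ (λ_ (G.map f)).inv) := by
        rw [Iso.inv_hom_id, id_whiskerRight]; bicategory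

/-- The inverse strong natural transformation. -/
noncomputable def inverse
    (hl : ∀ X, leftZigzag (u X).hom (c X).hom = (λ_ (η.app X)).hom ≫ (ρ_ (η.app X)).inv)
    (hr : ∀ X, rightZigzag (u X).hom (c X).hom = (ρ_ (g X)).hom ≫ (λ_ (g X)).inv) :
    Oplax.StrongTrans G F where
  app X := g X
  naturality f := asIso (mateHom η g u c f)
  naturality_naturality β := by
    simp only [asIso_hom]; exact mate_naturality η g u c β
  naturality_id X := by
    simp only [asIso_hom]; exact mate_id η g u c X (hr X)
  naturality_comp f h := by
    simp only [asIso_hom]; exact mate_comp η g u c (hl _) f h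

end StrongPseudoInvAux

open scoped CategoryTheory.Pseudofunctor.StrongTrans CategoryTheory.Oplax.OplaxTrans

open StrongPseudoInvAux in
/-- Lemma 3.1 (equivalence case): a strong natural transformation between pseudofunctors
whose components are all equivalences is an equivalence in the bicategory of
pseudofunctors: it admits a pseudo-inverse up to invertible modifications. -/
theorem strongNatTrans_equivalence_of_pointwise_equivalence
    {B : Type u₁} [Bicategory.{w₁, v₁} B] {C : Type u₂} [Bicategory.{w₂, v₂} C]
    (F G : Pseudofunctor B C) (η : F ⟶ G)
    (h : ∀ X : B, ∃ g : G.obj X ⟶ F.obj X,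
      Nonempty (η.app X ≫ g ≅ 𝟙 (F.obj X)) ∧ Nonempty (g ≫ η.app X ≅ 𝟙 (G.obj X))) :
    ∃ θ : G ⟶ F,
      Nonempty ((show F.toOplax ⟶ F.toOplax from (η ≫ θ).toOplax.toOplax) ≅
          (show F.toOplax ⟶ F.toOplax from (𝟙 F : F ⟶ F).toOplax.toOplax)) ∧
      Nonempty ((show G.toOplax ⟶ G.toOplax from (θ ≫ η).toOplax.toOplax) ≅
          (show G.toOplax ⟶ G.toOplax from (𝟙 G : G ⟶ G).toOplax.toOplax)) := by
  choose g₀ hu hc using h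
  let e : ∀ X : B, Bicategory.Equivalence (F.obj X) (G.obj X) := fun X =>
    Bicategory.Equivalence.mkOfAdjointifyCounit ((hu X).some.symm) ((hc X).some)
  let g : ∀ X : B, G.toOplax.obj X ⟶ F.toOplax.obj X := fun X => (e X).inv
  let u : ∀ X : B, 𝟙 (F.toOplax.obj X) ≅ η.app X ≫ g X := fun X => (e X).unit
  let c : ∀ X : B, g X ≫ η.app X ≅ 𝟙 (G.toOplax.obj X) := fun X => (e X).counit
  have hl : ∀ X, leftZigzag (u X).hom (c X).hom =
      (λ_ (η.app X)).hom ≫ (ρ_ (η.app X)).inv := fun X => (e X).left_triangle_hom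
  have hr : ∀ X, rightZigzag (u X).hom (c X).hom =
      (ρ_ (g X)).hom ≫ (λ_ (g X)).inv := fun X => (e X).right_triangle_hom
  refine ⟨Pseudofunctor.StrongTrans.mkOfOplax (inverse η.toOplax g u c hl hr), ⟨?_⟩, ⟨?_⟩⟩
  · refine Oplax.OplaxTrans.isoMk (fun X => (u X).symm) (fun {a b} f => ?_)
    have := counit_nat η.toOplax g u c (hl a) f
    dsimp only [Pseudofunctor.StrongTrans.vcomp, Pseudofunctor.StrongTrans.mkOfOplax,
      Pseudofunctor.StrongTrans.toOplax, Pseudofunctor.StrongTrans.id,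
      Oplax.StrongTrans.vcomp, Oplax.StrongTrans.mkOfOplax,
      Oplax.StrongTrans.toOplax, Oplax.StrongTrans.id, Oplax.OplaxTrans.vcomp,
      Oplax.OplaxTrans.id, inverse, Pseudofunctor.StrongTrans.categoryStruct] at this ⊢
    simp at this ⊢
    exact this.trans (by bicategory)
  · refine Oplax.OplaxTrans.isoMk (fun X => c X) (fun {a b} f => ?_)
    have := unit_nat η.toOplax g u c (hl b) f
    dsimp only [Pseudofunctor.StrongTrans.vcomp, Pseudofunctor.StrongTrans.mkOfOplax,
      Pseudofunctor.StrongTrans.toOplax, Pseudofunctor.StrongTrans.id,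
      Oplax.StrongTrans.vcomp, Oplax.StrongTrans.mkOfOplax,
      Oplax.StrongTrans.toOplax, Oplax.StrongTrans.id, Oplax.OplaxTrans.vcomp,
      Oplax.OplaxTrans.id, inverse, Pseudofunctor.StrongTrans.categoryStruct] at this ⊢
    simp at this ⊢
    exact this.trans (by bicategory)
end

section
/- Let F : A ⥤ B be a functor and let P_F be its iso-comma category, with projections p : P_F ⥤ A and q : P_F ⥤ B. Then: (1) the functor s : A ⥤ P_F sending a to (a, F.obj a, identity isomorphism) satisfies p ∘ s = 𝟭_A, the functor p is an equivalence of categories with s as an equivalence inverse, and p is an isofibration, so p is a surjective equivalence; (2) the induced functor (p, q) : P_F ⥤ A × B is a discrete isofibration: for every object (a, b, β) of P_F and every pair of isomorphisms u : a' ≅ a in A and v : b' ≅ b in B, there is a unique object (a', b', β') of P_F together with an isomorphism (a', b', β') ≅ (a, b, β) in P_F whose two components are u and v. -/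
open CategoryTheory CategoryTheory.Limits

universe v₁ v₂ u₁ u₂

variable {A : Type u₁} [Category.{v₁} A] {B : Type u₂} [Category.{v₂} B]

/-- A functor is an isofibration if every isomorphism whose domain is in the image
can be lifted. -/
def Isofibration (F : A ⥤ B) : Prop :=
  ∀ (a : A) (b : B) (β : F.obj a ≅ b),
    ∃ (a' : A) (α : a ≅ a') (h : F.obj a' = b), F.mapIso α ≪≫ eqToIso h = β

/-- The iso-comma category of a functor `F : A ⥤ B`: objects are triples `(a, b, β)` with
`β : F.obj a ≅ b`. -/
abbrev IsoComma (F : A ⥤ B) : Type _ :=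
  ObjectProperty.FullSubcategory (fun X : Comma F (𝟭 B) => IsIso X.hom)

namespace IsoComma

variable (F : A ⥤ B)

/-- Build an object of the iso-comma category. -/
def mk (a : A) (b : B) (β : F.obj a ≅ b) : IsoComma F :=
  ⟨⟨a, b, β.hom⟩, inferInstance⟩

/-- First projection of the iso-comma category. -/
def p : IsoComma F ⥤ A :=
  ObjectProperty.ι _ ⋙ Comma.fst F (𝟭 B)

/-- Second projection of the iso-comma category. -/
def q : IsoComma F ⥤ B :=
  ObjectProperty.ι _ ⋙ Comma.snd F (𝟭 B)

/-- The canonical section of the first projection, sending `a` to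
`(a, F.obj a, Iso.refl _)`. -/
def s : A ⥤ IsoComma F where
  obj a := mk F a (F.obj a) (Iso.refl _)
  map {a a'} u := ObjectProperty.homMk (show (⟨a, F.obj a, 𝟙 _⟩ : Comma F (𝟭 B)) ⟶ ⟨a', F.obj a', 𝟙 _⟩ from
    { left := u
      right := F.map u })

end IsoComma

namespace IsoComma

variable {F : A ⥤ B}

/-- The structure map of an object as an isomorphism. -/
noncomputable def iso (X : IsoComma F) : F.obj X.obj.left ≅ X.obj.right :=
  haveI := X.property; asIso X.obj.hom

@[simp] lemma iso_hom (X : IsoComma F) : (iso X).hom = X.obj.hom := rfl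

/-- Build a morphism of the iso-comma category from components. -/
def homMk' {X Y : IsoComma F} (l : X.obj.left ⟶ Y.obj.left) (r : X.obj.right ⟶ Y.obj.right)
    (w : F.map l ≫ Y.obj.hom = X.obj.hom ≫ r) : X ⟶ Y :=
  ObjectProperty.homMk (show X.obj ⟶ Y.obj from { left := l, right := r, w := w })

@[simp] lemma homMk'_left {X Y : IsoComma F} (l r w) :
    (homMk' (X := X) (Y := Y) l r w).hom.left = l := rfl

@[simp] lemma homMk'_right {X Y : IsoComma F} (l r w) :
    (homMk' (X := X) (Y := Y) l r w).hom.right = r := rfl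

@[simp] lemma comp_left {X Y Z : IsoComma F} (f : X ⟶ Y) (g : Y ⟶ Z) :
    (f ≫ g).hom.left = f.hom.left ≫ g.hom.left := rfl

@[simp] lemma comp_right {X Y Z : IsoComma F} (f : X ⟶ Y) (g : Y ⟶ Z) :
    (f ≫ g).hom.right = f.hom.right ≫ g.hom.right := rfl

@[simp] lemma id_left (X : IsoComma F) : (𝟙 X : X ⟶ X).hom.left = 𝟙 X.obj.left := rfl

@[simp] lemma id_right (X : IsoComma F) : (𝟙 X : X ⟶ X).hom.right = 𝟙 X.obj.right := rfl

@[simp] lemma p_map {X Y : IsoComma F} (f : X ⟶ Y) : (p F).map f = f.hom.left := rfl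

@[simp] lemma p_obj (X : IsoComma F) : (p F).obj X = X.obj.left := rfl

@[simp] lemma q_obj (X : IsoComma F) : (q F).obj X = X.obj.right := rfl

@[simp] lemma q_map {X Y : IsoComma F} (f : X ⟶ Y) : (q F).map f = f.hom.right := rfl

@[simp] lemma s_map_left {a a' : A} (u : a ⟶ a') : ((s F).map u).hom.left = u := rfl

@[simp] lemma s_map_right {a a' : A} (u : a ⟶ a') : ((s F).map u).hom.right = F.map u := rfl

/-- Build an isomorphism of the iso-comma category from componentwise isomorphisms. -/
def isoMk' {X Y : IsoComma F} (l : X.obj.left ≅ Y.obj.left) (r : X.obj.right ≅ Y.obj.right)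
    (w : F.map l.hom ≫ Y.obj.hom = X.obj.hom ≫ r.hom) : X ≅ Y where
  hom := homMk' l.hom r.hom w
  inv := homMk' l.inv r.inv (by
    have h : F.map l.hom ≫ Y.obj.hom ≫ r.inv = X.obj.hom := by
      rw [← Category.assoc, w, Category.assoc, Iso.hom_inv_id, Category.comp_id]
    rw [← h, ← Category.assoc, ← Category.assoc, ← F.map_comp, l.inv_hom_id, F.map_id,
      Category.id_comp])
  hom_inv_id := by
    apply ObjectProperty.hom_ext
    apply CommaMorphism.ext <;> simp
  inv_hom_id := by
    apply ObjectProperty.hom_ext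
    apply CommaMorphism.ext <;> simp

@[simp] lemma isoMk'_hom {X Y : IsoComma F} (l r w) :
    (isoMk' (X := X) (Y := Y) l r w).hom = homMk' l.hom r.hom w := rfl

@[simp] lemma isoMk'_hom_left {X Y : IsoComma F} (l r w) :
    ((isoMk' (X := X) (Y := Y) l r w).hom).hom.left = l.hom := rfl

@[simp] lemma isoMk'_hom_right {X Y : IsoComma F} (l r w) :
    ((isoMk' (X := X) (Y := Y) l r w).hom).hom.right = r.hom := rfl

@[simp] lemma isoMk'_inv_left {X Y : IsoComma F} (l r w) :
    ((isoMk' (X := X) (Y := Y) l r w).inv).hom.left = l.inv := rfl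

@[simp] lemma isoMk'_inv_right {X Y : IsoComma F} (l r w) :
    ((isoMk' (X := X) (Y := Y) l r w).inv).hom.right = r.inv := rfl

/-- The counit-style isomorphism `s.obj (p.obj X) ≅ X`. -/
noncomputable def counitAux (X : IsoComma F) :
    (IsoComma.p F ⋙ IsoComma.s F).obj X ≅ X :=
  isoMk' (Iso.refl _) (iso X) (by simp [s, mk])

/-- The equivalence between the iso-comma category and `A`. -/
noncomputable def equivalenceP (F : A ⥤ B) : Equivalence (IsoComma F) A where
  functor := IsoComma.p F
  inverse := IsoComma.s F
  unitIso := NatIso.ofComponents (fun X => (counitAux X).symm) (by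
    intro X Y f
    apply ObjectProperty.hom_ext
    apply CommaMorphism.ext
    · show f.hom.left ≫ 𝟙 _ = 𝟙 _ ≫ f.hom.left
      simp
    · have hw := f.hom.w
      simp only [Functor.id_map] at hw
      haveI := Y.property
      haveI := X.property
      show f.hom.right ≫ inv Y.obj.hom = inv X.obj.hom ≫ F.map f.hom.left
      rw [IsIso.eq_inv_comp, ← Category.assoc, ← hw, Category.assoc, IsIso.hom_inv_id,
        Category.comp_id])
  counitIso := Iso.refl _
  functor_unitIso_comp := by
    intro X
    simp [counitAux]
    exact Category.comp_id _

end IsoComma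

/-- Proposition 5.2: for a functor `F : A ⥤ B`, (1) the canonical section `s` of the
projection `p` of the iso-comma category witnesses `p` as a surjective equivalence
(an equivalence of categories that is moreover an isofibration), and (2) the pair of
projections `(p, q) : P_F ⥤ A × B` is a discrete isofibration: any pair of isomorphisms
into the two components of an object of `P_F` lifts uniquely. -/
theorem isoComma_projection_surjective_equivalence_and_discrete_isofibration
    (F : A ⥤ B) :
    IsoComma.s F ⋙ IsoComma.p F = 𝟭 A ∧
    Nonempty (IsoComma.p F ⋙ IsoComma.s F ≅ 𝟭 (IsoComma F)) ∧
    (IsoComma.p F).IsEquivalence ∧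
    Isofibration (IsoComma.p F) ∧
    (∀ (X : IsoComma F) (a' : A) (b' : B) (u : a' ≅ (IsoComma.p F).obj X)
        (v : b' ≅ (IsoComma.q F).obj X),
      ∃! β' : F.obj a' ≅ b',
        ∃ e : IsoComma.mk F a' b' β' ≅ X,
          (IsoComma.p F).mapIso e = u ∧ (IsoComma.q F).mapIso e = v) := by
  refine ⟨rfl, ⟨(IsoComma.equivalenceP F).unitIso.symm⟩,
    (IsoComma.equivalenceP F).isEquivalence_functor, ?_, ?_⟩
  · intro X a β
    change X.obj.left ≅ a at β
    refine ⟨IsoComma.mk F a X.obj.right (F.mapIso β.symm ≪≫ IsoComma.iso X),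
      IsoComma.isoMk' β (Iso.refl _) (by simp [IsoComma.mk, IsoComma.iso]), rfl, ?_⟩
    ext
    exact Category.comp_id _
  · intro X a' b' u v
    change a' ≅ X.obj.left at u
    change b' ≅ X.obj.right at v
    refine ⟨F.mapIso u ≪≫ IsoComma.iso X ≪≫ v.symm,
      ⟨IsoComma.isoMk' u v (by simp [IsoComma.mk, IsoComma.iso]), ?_, ?_⟩, ?_⟩
    · ext; rfl
    · ext; rfl
    · rintro β'' ⟨e, hu, hv⟩
      have hl : e.hom.hom.left = u.hom := by
        rw [← hu]; rfl
      have hr : e.hom.hom.right = v.hom := by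
        rw [← hv]; rfl
      have hw := e.hom.hom.w
      simp only [Functor.id_map, hl, hr, IsoComma.mk] at hw
      ext
      show β''.hom = F.map u.hom ≫ X.obj.hom ≫ v.inv
      rw [← Category.assoc, hw]
      simp
end

section
/- Let j : A ⥤ C and g : B ⥤ C be functors and let fst : Comma j g ⥤ A be the first projection from the comma category. The following are equivalent: (1) g admits a left adjoint relative to j, i.e. there exist a functor f : A ⥤ B and a natural transformation θ : j ⟶ f ⋙ g such that for all objects a of A and b of B the map Hom_B(f.obj a, b) → Hom_C(j.obj a, g.obj b) sending α to θ.app a ≫ g.map α is a bijection; (2) fst admits a left adjoint L with fst ∘ L = 𝟭_A and an adjunction L ⊣ fst whose unit is the identity; (3) fst admits a left adjoint whose adjunction unit is a natural isomorphism. -/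
open CategoryTheory

universe v₁ v₂ v₃ u₁ u₂ u₃

/-- Lemma 8.1: for functors `j : A ⥤ C` and `g : B ⥤ C`, the following are equivalent:
(1) `g` admits a left adjoint relative to `j`; (2) the first projection of the comma
category `Comma j g` admits a left adjoint with identity unit (in particular it is a strict
retraction); (3) the first projection admits a left adjoint whose unit is invertible. -/
theorem relative_left_adjoint_iff_comma_fst_has_reflection
    {A : Type u₁} [Category.{v₁} A] {B : Type u₂} [Category.{v₂} B]
    {C : Type u₃} [Category.{v₃} C] (j : A ⥤ C) (g : B ⥤ C) :
    ((∃ (f : A ⥤ B) (θ : j ⟶ f ⋙ g),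
        ∀ (a : A) (b : B), Function.Bijective
          (fun α : f.obj a ⟶ b => θ.app a ≫ g.map α)) ↔
      (∃ (L : A ⥤ Comma j g) (adj : L ⊣ Comma.fst j g) (h : L ⋙ Comma.fst j g = 𝟭 A),
        adj.unit = eqToHom h.symm)) ∧
    ((∃ (L : A ⥤ Comma j g) (adj : L ⊣ Comma.fst j g) (h : L ⋙ Comma.fst j g = 𝟭 A),
        adj.unit = eqToHom h.symm) ↔
      (∃ (L : A ⥤ Comma j g) (adj : L ⊣ Comma.fst j g), IsIso adj.unit)) := by
  have h12 : (∃ (f : A ⥤ B) (θ : j ⟶ f ⋙ g),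
        ∀ (a : A) (b : B), Function.Bijective
          (fun α : f.obj a ⟶ b => θ.app a ≫ g.map α)) →
      (∃ (L : A ⥤ Comma j g) (adj : L ⊣ Comma.fst j g) (h : L ⋙ Comma.fst j g = 𝟭 A),
        adj.unit = eqToHom h.symm) := by
    rintro ⟨f, θ, hb⟩
    let e : ∀ (a : A) (b : B), (f.obj a ⟶ b) ≃ (j.obj a ⟶ g.obj b) :=
      fun a b => Equiv.ofBijective _ (hb a b)
    have he : ∀ (a : A) (b : B) (α : f.obj a ⟶ b),
        e a b α = θ.app a ≫ g.map α := fun _ _ _ => rfl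
    have hes : ∀ (a : A) (b : B) (ψ : j.obj a ⟶ g.obj b),
        θ.app a ≫ g.map ((e a b).symm ψ) = ψ := fun a b ψ =>
      (e a b).apply_symm_apply ψ
    let L : A ⥤ Comma j g :=
      { obj := fun a => ⟨a, f.obj a, θ.app a⟩
        map := fun {a a'} u => ⟨u, f.map u, θ.naturality u⟩ }
    have hL : L ⋙ Comma.fst j g = 𝟭 A := rfl
    let adj : L ⊣ Comma.fst j g := Adjunction.mkOfHomEquiv
      { homEquiv := fun a X =>
          { toFun := fun m => m.left
            invFun := fun u => ⟨u, (e a X.right).symm (j.map u ≫ X.hom), by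
              simp [hes, L]⟩
            left_inv := fun m => by
              ext
              · rfl
              · dsimp
                rw [Equiv.symm_apply_eq, he]
                simpa [L] using m.w.symm
            right_inv := fun u => rfl }
        homEquiv_naturality_left_symm := fun {a a' X} u v => by
          ext
          · rfl
          · dsimp
            rw [Equiv.symm_apply_eq, he]
            have nat := θ.naturality u
            simp only [Functor.comp_map] at nat
            simp only [Functor.map_comp, ← Category.assoc]
            rw [← nat, Category.assoc, Category.assoc, hes]
        homEquiv_naturality_right := fun {a X Y} m v => rfl }
    refine ⟨L, adj, hL, ?_⟩
    ext a
    simp [adj, L, Adjunction.mkOfHomEquiv]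
  have h23 : (∃ (L : A ⥤ Comma j g) (adj : L ⊣ Comma.fst j g) (h : L ⋙ Comma.fst j g = 𝟭 A),
        adj.unit = eqToHom h.symm) →
      (∃ (L : A ⥤ Comma j g) (adj : L ⊣ Comma.fst j g), IsIso adj.unit) := by
    rintro ⟨L, adj, h, hu⟩
    exact ⟨L, adj, by rw [hu]; infer_instance⟩
  have h31 : (∃ (L : A ⥤ Comma j g) (adj : L ⊣ Comma.fst j g), IsIso adj.unit) →
      (∃ (f : A ⥤ B) (θ : j ⟶ f ⋙ g),
        ∀ (a : A) (b : B), Function.Bijective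
          (fun α : f.obj a ⟶ b => θ.app a ≫ g.map α)) := by
    rintro ⟨L, adj, hu⟩
    have huA : ∀ a : A, IsIso (adj.unit.app a) := fun a => inferInstance
    refine ⟨L ⋙ Comma.snd j g,
      { app := fun a => j.map (adj.unit.app a) ≫ (L.obj a).hom
        naturality := fun a a' u => by
          have w := (L.map u).w
          have nu := adj.unit.naturality u
          dsimp [Comma.fst, Comma.snd] at w nu ⊢
          rw [← Category.assoc, ← Functor.map_comp, nu, Functor.map_comp,
            Category.assoc, w, Category.assoc] }, fun a b => ?_⟩
    dsimp
    constructor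
    · -- injective
      intro α₁ α₂ hαeq
      dsimp at hαeq
      set u := adj.unit.app a with hu'
      set ψ := j.map u ≫ (L.obj a).hom ≫ g.map α₁ with hψ
      have hψ₂ : ψ = j.map u ≫ (L.obj a).hom ≫ g.map α₂ := by
        rw [Category.assoc, Category.assoc] at hαeq
        rw [hψ, hαeq]
      have hw : ∀ α : (L.obj a).right ⟶ b,
          ψ = j.map u ≫ (L.obj a).hom ≫ g.map α →
          j.map (inv u) ≫ ψ = (L.obj a).hom ≫ g.map α := by
        intro α h
        rw [h, ← Category.assoc, ← j.map_comp, IsIso.inv_hom_id,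
          j.map_id, Category.id_comp]
      let X : Comma j g := ⟨a, b, ψ⟩
      let m₁ : L.obj a ⟶ X := ⟨inv u, α₁, hw α₁ hψ⟩
      let m₂ : L.obj a ⟶ X := ⟨inv u, α₂, hw α₂ hψ₂⟩
      have hm : m₁ = m₂ := by
        apply (adj.homEquiv a X).injective
        rw [Adjunction.homEquiv_unit, Adjunction.homEquiv_unit]
        show u ≫ (Comma.fst j g).map m₁ = u ≫ (Comma.fst j g).map m₂
        simp [m₁, m₂]
      exact congrArg CommaMorphism.right hm
    · -- surjective
      intro ψ
      let X : Comma j g := ⟨a, b, ψ⟩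
      let m : L.obj a ⟶ X := (adj.homEquiv a X).symm (𝟙 a)
      have hm : adj.unit.app a ≫ m.left = 𝟙 a := by
        have := (adj.homEquiv a X).apply_symm_apply (𝟙 a)
        rw [Adjunction.homEquiv_unit] at this
        exact this
      refine ⟨m.right, ?_⟩
      have w := m.w
      dsimp [X] at w ⊢
      rw [Category.assoc, ← w, ← Category.assoc, ← j.map_comp, hm,
        j.map_id, Category.id_comp]
  exact ⟨⟨h12, fun h => h31 (h23 h)⟩, ⟨h23, fun h => h12 (h31 h)⟩⟩
end

section
/- For every monoidal category X there exist a strict monoidal category Q, a strong monoidal functor L : Q ⥤ X, and a strong monoidal functor S : X ⥤ Q, such that the composite strong monoidal functor S followed by L is equal to the identity monoidal functor of X, and the underlying functor of L is an equivalence of categories. -/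
open CategoryTheory MonoidalCategory

universe v v₁ v₂ v₃ u u₁ u₂ u₃

/-- A monoidal category is strict when its associator and unitors are identities (modulo
the corresponding equalities of objects). -/
def MonoidalIsStrict (C : Type u) [Category.{v} C] [MonoidalCategory C] : Prop :=
  (∀ a b c : C, ∃ h : (a ⊗ b) ⊗ c = a ⊗ (b ⊗ c), (α_ a b c).hom = eqToHom h) ∧
  (∀ a : C, ∃ h : 𝟙_ C ⊗ a = a, (λ_ a).hom = eqToHom h) ∧
  (∀ a : C, ∃ h : a ⊗ 𝟙_ C = a, (ρ_ a).hom = eqToHom h)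

/-- A strong monoidal functor, bundled as a functor together with a monoidal structure
on it (whose unit and tensorator constraints are isomorphisms). -/
structure StrongMonoidalFunctor (C : Type u₁) (D : Type u₂) [Category.{v₁} C]
    [Category.{v₂} D] [MonoidalCategory C] [MonoidalCategory D] where
  toFunctor : C ⥤ D
  monoidal : toFunctor.Monoidal

namespace StrongMonoidalFunctor

variable {C : Type u₁} {D : Type u₂} {E : Type u₃} [Category.{v₁} C] [Category.{v₂} D]
  [Category.{v₃} E] [MonoidalCategory C] [MonoidalCategory D] [MonoidalCategory E]

/-- The identity strong monoidal functor. -/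
def id (C : Type u₁) [Category.{v₁} C] [MonoidalCategory C] : StrongMonoidalFunctor C C :=
  ⟨𝟭 C, inferInstance⟩

/-- Composition of strong monoidal functors. -/
def comp (F : StrongMonoidalFunctor C D) (G : StrongMonoidalFunctor D E) :
    StrongMonoidalFunctor C E :=
  letI := F.monoidal
  letI := G.monoidal
  ⟨F.toFunctor ⋙ G.toFunctor, inferInstance⟩

end StrongMonoidalFunctor

/-- `Q` is a strictification of `X` admitting a strict monoidal retraction: `Q` is strict
monoidal, and there are strong monoidal functors `L : Q ⥤ X` and `S : X ⥤ Q` with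
`S` followed by `L` equal to the identity monoidal functor of `X` and with the underlying
functor of `L` an equivalence of categories. -/
def IsStrictificationWithRetraction (X : Type u) [Category.{v} X] [MonoidalCategory X]
    (Q : Type u) [Category.{v} Q] [MonoidalCategory Q] : Prop :=
  MonoidalIsStrict Q ∧
  ∃ (L : StrongMonoidalFunctor Q X) (S : StrongMonoidalFunctor X Q),
    S.comp L = StrongMonoidalFunctor.id X ∧ L.toFunctor.IsEquivalence


namespace MacLaneStrictify

theorem strongMonoidalFunctor_ext {C : Type u₁} {D : Type u₂} [Category.{v₁} C]
    [Category.{v₂} D] [MonoidalCategory C] [MonoidalCategory D]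
    {F G : StrongMonoidalFunctor C D} (h : F.toFunctor = G.toFunctor)
    (hm : HEq F.monoidal G.monoidal) : F = G := by
  cases F
  cases G
  dsimp at h hm
  subst h
  rw [eq_of_heq hm]


variable {X : Type u} [Category.{v} X] [MonoidalCategory X]

/-- left-bracketed tensor starting from `x` -/
def tw (x : X) : List X → X
  | [] => x
  | b :: bs => tw (x ⊗ b) bs

variable (X) in
/-- left-bracketed tensor of a word -/
def tL : List X → X
  | [] => 𝟙_ X
  | a :: as => tw a as

@[simp] lemma tL_nil : tL X [] = 𝟙_ X := rfl
@[simp] lemma tL_cons (a : X) (as : List X) : tL X (a :: as) = tw a as := rfl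

def twMap {x y : X} (f : x ⟶ y) : ∀ bs : List X, tw x bs ⟶ tw y bs
  | [] => f
  | b :: bs => twMap (f ▷ b) bs

@[simp] lemma tw_nil (x : X) : tw x [] = x := rfl
lemma tw_cons (x b : X) (bs : List X) : tw x (b :: bs) = tw (x ⊗ b) bs := rfl

@[simp] lemma twMap_nil {x y : X} (f : x ⟶ y) : twMap f [] = f := rfl
lemma twMap_cons {x y : X} (f : x ⟶ y) (b : X) (bs : List X) :
    twMap f (b :: bs) = twMap (f ▷ b) bs := rfl

@[simp] lemma twMap_id (x : X) : ∀ bs : List X, twMap (𝟙 x) bs = 𝟙 (tw x bs)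
  | [] => rfl
  | b :: bs => by
      rw [twMap_cons, MonoidalCategory.id_whiskerRight]
      exact twMap_id (x ⊗ b) bs

@[simp] lemma twMap_comp {x y z : X} (f : x ⟶ y) (g : y ⟶ z) :
    ∀ bs : List X, twMap (f ≫ g) bs = twMap f bs ≫ twMap g bs
  | [] => rfl
  | b :: bs => by
      rw [twMap_cons, MonoidalCategory.comp_whiskerRight]
      exact twMap_comp _ _ bs

def twSplit (x y : X) : ∀ bs : List X, x ⊗ tw y bs ⟶ tw (x ⊗ y) bs
  | [] => 𝟙 _
  | b :: bs => twSplit x (y ⊗ b) bs ≫ twMap (α_ x y b).inv bs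

@[simp] lemma twSplit_nil (x y : X) : twSplit x y [] = 𝟙 (x ⊗ y) := rfl
lemma twSplit_cons (x y b : X) (bs : List X) :
    twSplit x y (b :: bs) = twSplit x (y ⊗ b) bs ≫ twMap (α_ x y b).inv bs := rfl

theorem isIso_twMap {x y : X} (f : x ⟶ y) (hf : IsIso f) : ∀ bs : List X, IsIso (twMap f bs)
  | [] => hf
  | b :: bs => isIso_twMap (f ▷ b) inferInstance bs

instance {x y : X} (f : x ⟶ y) [IsIso f] (bs : List X) : IsIso (twMap f bs) :=
  isIso_twMap f ‹_› bs

instance isIso_twSplit (x y : X) : ∀ bs : List X, IsIso (twSplit x y bs)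
  | [] => inferInstanceAs (IsIso (𝟙 (x ⊗ y)))
  | b :: bs =>
      letI := isIso_twSplit x (y ⊗ b) bs
      inferInstanceAs (IsIso (twSplit x (y ⊗ b) bs ≫ twMap (α_ x y b).inv bs))

lemma twSplit_natural_left {x x' : X} (f : x ⟶ x') (y : X) :
    ∀ bs : List X, (f ▷ tw y bs) ≫ twSplit x' y bs = twSplit x y bs ≫ twMap (f ▷ y) bs := by
  intro bs
  induction bs generalizing y with
  | nil => simp
  | cons b bs ih =>
      rw [twSplit_cons, twSplit_cons, twMap_cons]
      dsimp only [tw_cons]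
      rw [← Category.assoc,
        show (f ▷ tw (y ⊗ b) bs) ≫ twSplit x' (y ⊗ b) bs =
          twSplit x (y ⊗ b) bs ≫ twMap (f ▷ (y ⊗ b)) bs from ih (y ⊗ b),
        Category.assoc, ← twMap_comp, Category.assoc, ← twMap_comp]
      congr 1
      simp

lemma twSplit_natural_right (x : X) {y y' : X} (f : y ⟶ y') :
    ∀ bs : List X, (x ◁ twMap f bs) ≫ twSplit x y' bs = twSplit x y bs ≫ twMap (x ◁ f) bs := by
  intro bs
  induction bs generalizing y y' f with
  | nil => simp
  | cons b bs ih =>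
      rw [twSplit_cons, twSplit_cons, twMap_cons, twMap_cons]
      dsimp only [tw_cons]
      rw [← Category.assoc, ih (f ▷ b), Category.assoc, Category.assoc,
        ← twMap_comp, ← twMap_comp]
      congr 1
      simp

lemma twSplit_assoc (x y z : X) :
    ∀ cs : List X, twSplit (x ⊗ y) z cs =
      (α_ x y (tw z cs)).hom ≫ (x ◁ twSplit y z cs) ≫ twSplit x (y ⊗ z) cs ≫
        twMap (α_ x y z).inv cs := by
  intro cs
  induction cs generalizing z with
  | nil => simp [tw]
  | cons d ds ih =>
      rw [twSplit_cons, twSplit_cons, twSplit_cons, twMap_cons, ih (z ⊗ d)]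
      dsimp only [tw_cons]
      rw [MonoidalCategory.whiskerLeft_comp]
      slice_rhs 3 4 => rw [twSplit_natural_right]
      simp only [Category.assoc, ← twMap_comp]
      rw [pentagon_inv]


def tLmul (x : X) : ∀ l : List X, x ⊗ tL X l ⟶ tw x l
  | [] => (ρ_ x).hom
  | b :: bs => twSplit x b bs

@[simp] lemma tLmul_nil (x : X) : tLmul x [] = (ρ_ x).hom := rfl
@[simp] lemma tLmul_cons (x b : X) (bs : List X) : tLmul x (b :: bs) = twSplit x b bs := rfl

def μw (x : X) : ∀ (bs l : List X), tw x bs ⊗ tL X l ⟶ tw x (bs ++ l)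
  | [], l => tLmul x l
  | b :: bs, l => μw (x ⊗ b) bs l

@[simp] lemma μw_nil_arg (x : X) (l : List X) : μw x [] l = tLmul x l := rfl
lemma μw_cons (x b : X) (bs l : List X) : μw x (b :: bs) l = μw (x ⊗ b) bs l := rfl

variable (X) in
def μL : ∀ l l' : List X, tL X l ⊗ tL X l' ⟶ tL X (l ++ l')
  | [], l' => (λ_ (tL X l')).hom
  | a :: as, l' => μw a as l'

@[simp] lemma μL_nil (l : List X) : μL X [] l = (λ_ (tL X l)).hom := rfl
lemma μL_cons (a : X) (as l : List X) : μL X (a :: as) l = μw a as l := rfl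

instance isIso_tLmul (x : X) : ∀ l : List X, IsIso (tLmul x l)
  | [] => inferInstanceAs (IsIso (ρ_ x).hom)
  | b :: bs => inferInstanceAs (IsIso (twSplit x b bs))

instance isIso_μw (x : X) : ∀ (bs l : List X), IsIso (μw x bs l)
  | [], l => inferInstanceAs (IsIso (tLmul x l))
  | b :: bs, l => isIso_μw (x ⊗ b) bs l

instance isIso_μL : ∀ l l' : List X, IsIso (μL X l l')
  | [], l' => inferInstanceAs (IsIso (λ_ (tL X l')).hom)
  | a :: as, l' => inferInstanceAs (IsIso (μw a as l'))

lemma μw_natural_head {x y : X} (f : x ⟶ y) :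
    ∀ (bs l : List X), (twMap f bs ▷ tL X l) ≫ μw y bs l = μw x bs l ≫ twMap f (bs ++ l)
  | [], [] => by simp
  | [], b :: bs => by simpa [twMap_cons, tw_cons] using twSplit_natural_left f b bs
  | b :: bs, l => μw_natural_head (f ▷ b) bs l

lemma twSplit_μw (x y : X) :
    ∀ (bs l : List X), (twSplit x y bs ▷ tL X l) ≫ μw (x ⊗ y) bs l =
      (α_ x (tw y bs) (tL X l)).hom ≫ (x ◁ μw y bs l) ≫ twSplit x y (bs ++ l)
  | [], [] => by simp
  | [], c :: cs => by
      simpa [twSplit_cons, tw_cons] using (twSplit_assoc x y c cs)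
  | b :: bs, l => by
      have h1 := μw_natural_head ((α_ x y b).inv) bs l
      have h2 := twSplit_μw x (y ⊗ b) bs l
      show ((twSplit x (y ⊗ b) bs ≫ twMap (α_ x y b).inv bs) ▷ tL X l) ≫ μw ((x ⊗ y) ⊗ b) bs l =
        (α_ x (tw (y ⊗ b) bs) (tL X l)).hom ≫ (x ◁ μw (y ⊗ b) bs l) ≫
          (twSplit x (y ⊗ b) (bs ++ l) ≫ twMap (α_ x y b).inv (bs ++ l))
      rw [MonoidalCategory.comp_whiskerRight, Category.assoc,
        show (twMap (α_ x y b).inv bs ▷ tL X l) ≫ μw ((x ⊗ y) ⊗ b) bs l =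
          μw (x ⊗ (y ⊗ b)) bs l ≫ twMap (α_ x y b).inv (bs ++ l) from h1,
        ← Category.assoc, h2]
      simp

lemma μw_assoc (x : X) :
    ∀ (bs l₂ l₃ : List X),
      (μw x bs l₂ ▷ tL X l₃) ≫ μw x (bs ++ l₂) l₃ ≫
          eqToHom (congrArg (tw x) (List.append_assoc bs l₂ l₃)) =
        (α_ (tw x bs) (tL X l₂) (tL X l₃)).hom ≫ (tw x bs ◁ μL X l₂ l₃) ≫ μw x bs (l₂ ++ l₃)
  | [], [], l₃ => by simp
  | [], b :: bs₂, l₃ => by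
      simpa [μL_cons, μw_cons, tw_cons] using twSplit_μw x b bs₂ l₃
  | b :: bs, l₂, l₃ => μw_assoc (x ⊗ b) bs l₂ l₃

lemma μL_assoc (l₁ l₂ l₃ : List X) :
    (μL X l₁ l₂ ▷ tL X l₃) ≫ μL X (l₁ ++ l₂) l₃ ≫
        eqToHom (congrArg (tL X) (List.append_assoc l₁ l₂ l₃)) =
      (α_ (tL X l₁) (tL X l₂) (tL X l₃)).hom ≫ (tL X l₁ ◁ μL X l₂ l₃) ≫ μL X l₁ (l₂ ++ l₃) := by
  cases l₁ with
  | nil =>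
      simp only [μL_nil, eqToHom_refl, Category.comp_id, List.nil_append, tL_nil]
      rw [show (λ_ (tL X l₂)).hom ▷ tL X l₃ =
            (α_ (𝟙_ X) (tL X l₂) (tL X l₃)).hom ≫ (λ_ (tL X l₂ ⊗ tL X l₃)).hom by
          rw [leftUnitor_tensor_hom]; simp]
      simp [leftUnitor_naturality]
  | cons a as => exact μw_assoc a as l₂ l₃

lemma μL_nil_right : ∀ l : List X,
    μL X l [] ≫ eqToHom (congrArg (tL X) (List.append_nil l)) = (ρ_ (tL X l)).hom
  | [] => by simpa using unitors_equal (C := X)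
  | a :: as => by
      have : ∀ (x : X) (bs : List X),
          μw x bs [] ≫ eqToHom (congrArg (tw x) (List.append_nil bs)) = (ρ_ (tw x bs)).hom := by
        intro x bs
        induction bs generalizing x with
        | nil => simp
        | cons b bs ih => exact ih (x ⊗ b)
      exact this a as


/-- The strictification category: words of objects of `X`, with morphisms between
the left-bracketed tensor products. -/
noncomputable instance instQCat : Category.{v} (List X) where
  Hom l l' := tL X l ⟶ tL X l'
  id l := 𝟙 (tL X l)
  comp f g := f ≫ g

variable (X) in
/-- The canonical functor from the strictification to `X`. -/
noncomputable def LFun : List X ⥤ X where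
  obj := tL X
  map f := f

instance : (LFun X).Faithful := ⟨fun h => h⟩
instance : (LFun X).Full := ⟨fun f => ⟨f, rfl⟩⟩
instance : (LFun X).EssSurj := ⟨fun x => ⟨[x], ⟨Iso.refl x⟩⟩⟩
instance : (LFun X).IsEquivalence := {}

@[simp] lemma LFun_obj (l : List X) : (LFun X).obj l = tL X l := rfl
@[simp] lemma LFun_map {l l' : List X} (f : l ⟶ l') : (LFun X).map f = f := rfl

/-- whiskering in the strictification -/
noncomputable def QwL (l : List X) {l₁ l₂ : List X} (f : tL X l₁ ⟶ tL X l₂) :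
    tL X (l ++ l₁) ⟶ tL X (l ++ l₂) :=
  inv (μL X l l₁) ≫ (tL X l ◁ f) ≫ μL X l l₂

/-- whiskering in the strictification -/
noncomputable def QwR {l₁ l₂ : List X} (f : tL X l₁ ⟶ tL X l₂) (l : List X) :
    tL X (l₁ ++ l) ⟶ tL X (l₂ ++ l) :=
  inv (μL X l₁ l) ≫ (f ▷ tL X l) ≫ μL X l₂ l

/-- tensor of morphisms in the strictification -/
noncomputable def QtH {l₁ l₁' l₂ l₂' : List X} (f : tL X l₁ ⟶ tL X l₁')
    (g : tL X l₂ ⟶ tL X l₂') : tL X (l₁ ++ l₂) ⟶ tL X (l₁' ++ l₂') :=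
  inv (μL X l₁ l₂) ≫ (f ⊗ₘ g) ≫ μL X l₁' l₂'

noncomputable instance instQStruct : MonoidalCategoryStruct (List X) where
  tensorObj l l' := l ++ l'
  whiskerLeft l {l₁ l₂} f := QwL l f
  whiskerRight {l₁ l₂} f l := QwR f l
  tensorHom {l₁ l₁' l₂ l₂'} f g := QtH f g
  tensorUnit := ([] : List X)
  associator l₁ l₂ l₃ := eqToIso (List.append_assoc l₁ l₂ l₃)
  leftUnitor l := eqToIso (List.nil_append l)
  rightUnitor l := eqToIso (List.append_nil l)

@[simp] lemma Q_tensorObj (l l' : List X) : l ⊗ l' = l ++ l' := rfl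
@[simp] lemma Q_tensorUnit : (𝟙_ (List X)) = ([] : List X) := rfl
@[simp] lemma Q_whiskerLeft (l : List X) {l₁ l₂ : List X} (f : l₁ ⟶ l₂) :
    l ◁ f = QwL l f := rfl
@[simp] lemma Q_whiskerRight {l₁ l₂ : List X} (f : l₁ ⟶ l₂) (l : List X) :
    f ▷ l = QwR f l := rfl
@[simp] lemma Q_tensorHom {l₁ l₁' l₂ l₂' : List X} (f : l₁ ⟶ l₁') (g : l₂ ⟶ l₂') :
    f ⊗ₘ g = QtH f g := rfl
@[simp] lemma Q_associator (l₁ l₂ l₃ : List X) :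
    (α_ l₁ l₂ l₃) = eqToIso (List.append_assoc l₁ l₂ l₃) := rfl
@[simp] lemma Q_leftUnitor (l : List X) : (λ_ l) = eqToIso (List.nil_append l) := rfl
@[simp] lemma Q_rightUnitor (l : List X) : (ρ_ l) = eqToIso (List.append_nil l) := rfl
@[simp] lemma Q_id (l : List X) : 𝟙 l = 𝟙 (tL X l) := rfl
@[simp] lemma Q_comp {l₁ l₂ l₃ : List X} (f : l₁ ⟶ l₂) (g : l₂ ⟶ l₃) :
    f ≫ g = (f : tL X l₁ ⟶ tL X l₂) ≫ (g : tL X l₂ ⟶ tL X l₃) := rfl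

variable (X) in
noncomputable def fData : Monoidal.InducingFunctorData (LFun X) where
  μIso l l' := (asIso (μL X l l') : tL X l ⊗ tL X l' ≅ tL X (l ++ l'))
  εIso := Iso.refl (𝟙_ X)
  whiskerLeft_eq l l₁ l₂ f := rfl
  whiskerRight_eq f l := rfl
  tensorHom_eq f g := rfl
  associator_eq l₁ l₂ l₃ := by
    rw [Q_associator, eqToIso.hom, eqToHom_map]
    simp only [LFun_obj, LFun_map, Iso.trans_hom, Iso.symm_hom, asIso_inv,
      tensorIso_hom, Iso.refl_hom, asIso_hom, Category.assoc, tensorHom_id, id_tensorHom,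
      Q_tensorObj]
    rw [← μL_assoc]
    simp [QtH, QwL, QwR]
  leftUnitor_eq l := by
    rw [Q_leftUnitor, eqToIso.hom, eqToHom_map]
    simp only [LFun_obj, LFun_map, Iso.trans_hom, Iso.symm_hom, asIso_inv,
      tensorIso_hom, Iso.refl_hom, Iso.refl_inv, asIso_hom, Q_tensorUnit, μL_nil]
    simp
    exact (Iso.inv_hom_id _).symm
  rightUnitor_eq l := by
    rw [Q_rightUnitor, eqToIso.hom, eqToHom_map]
    have h := μL_nil_right (X := X) l
    replace h := (IsIso.eq_inv_comp _).mpr h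
    simp only [LFun_obj, LFun_map, Iso.trans_hom, Iso.symm_hom, asIso_inv,
      tensorIso_hom, Iso.refl_hom, Iso.refl_inv, asIso_hom, Q_tensorUnit,
      MonoidalCategory.id_tensorHom_id, Category.comp_id, Category.id_comp]
    refine h.trans ?_
    simp

noncomputable instance instQMon : MonoidalCategory (List X) :=
  Monoidal.induced (LFun X) (fData X)


@[simp] lemma μL_sing (x y : X) : μL X [x] [y] = 𝟙 (x ⊗ y) := rfl
@[simp] lemma μL_pair_sing (x y z : X) : μL X [x, y] [z] = 𝟙 ((x ⊗ y) ⊗ z) := rfl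
@[simp] lemma μL_sing_pair (x y z : X) : μL X [x] [y, z] = (α_ x y z).inv := by
  show twSplit x y [z] = _
  rw [twSplit_cons]
  simp
  rfl
@[simp] lemma μL_sing_nil (x : X) : μL X [x] [] = (ρ_ x).hom := rfl
@[simp] lemma μL_nil_sing (x : X) : μL X [] [x] = (λ_ x).hom := rfl

variable (X) in
/-- The strong monoidal section of `LFun`. -/
noncomputable def SFun : X ⥤ List X where
  obj x := [x]
  map {x y} f := (f : tL X [x] ⟶ tL X [y])
  map_id _ := rfl
  map_comp _ _ := rfl

@[simp] lemma SFun_obj (x : X) : (SFun X).obj x = [x] := rfl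
@[simp] lemma SFun_map {x y : X} (f : x ⟶ y) : (SFun X).map f = (f : tL X [x] ⟶ tL X [y]) := rfl

variable (X) in
noncomputable def Score : (SFun X).CoreMonoidal where
  εIso :=
    { hom := (𝟙 (𝟙_ X) : tL X [] ⟶ tL X [𝟙_ X])
      inv := (𝟙 (𝟙_ X) : tL X [𝟙_ X] ⟶ tL X [])
      hom_inv_id := Category.id_comp _
      inv_hom_id := Category.id_comp _ }
  μIso x y :=
    { hom := (𝟙 (x ⊗ y) : tL X ([x] ++ [y]) ⟶ tL X [x ⊗ y])
      inv := (𝟙 (x ⊗ y) : tL X [x ⊗ y] ⟶ tL X ([x] ++ [y]))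
      hom_inv_id := Category.id_comp _
      inv_hom_id := Category.id_comp _ }
  μIso_hom_natural_left := by
    intro x y f z
    apply (LFun X).map_injective
    show (inv (𝟙 (x ⊗ z)) ≫ (f ▷ z) ≫ 𝟙 (y ⊗ z)) ≫ 𝟙 (y ⊗ z) = 𝟙 (x ⊗ z) ≫ (f ▷ z)
    simp
  μIso_hom_natural_right := by
    intro x y z f
    apply (LFun X).map_injective
    show (inv (𝟙 (z ⊗ x)) ≫ (z ◁ f) ≫ 𝟙 (z ⊗ y)) ≫ 𝟙 (z ⊗ y) = 𝟙 (z ⊗ x) ≫ (z ◁ f)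
    simp
  associativity := by
    intro x y z
    apply (LFun X).map_injective
    show (inv (𝟙 ((x ⊗ y) ⊗ z)) ≫ (𝟙 (x ⊗ y) ▷ z) ≫ 𝟙 ((x ⊗ y) ⊗ z)) ≫ 𝟙 ((x ⊗ y) ⊗ z) ≫
        (α_ x y z).hom = 𝟙 ((x ⊗ y) ⊗ z) ≫
          (inv (𝟙 (x ⊗ (y ⊗ z)) ≫ (α_ x y z).inv) ≫ (x ◁ 𝟙 (y ⊗ z)) ≫ 𝟙 (x ⊗ (y ⊗ z))) ≫ 𝟙 (x ⊗ (y ⊗ z))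
    simp
  left_unitality := by
    intro x
    apply (LFun X).map_injective
    show 𝟙 x = (inv (λ_ x).hom ≫ (𝟙 (𝟙_ X) ▷ x) ≫ 𝟙 (𝟙_ X ⊗ x)) ≫ 𝟙 (𝟙_ X ⊗ x) ≫ (λ_ x).hom
    simp
  right_unitality := by
    intro x
    apply (LFun X).map_injective
    show 𝟙 x = (inv (ρ_ x).hom ≫ (x ◁ 𝟙 (𝟙_ X)) ≫ 𝟙 (x ⊗ 𝟙_ X)) ≫ 𝟙 (x ⊗ 𝟙_ X) ≫ (ρ_ x).hom
    simp

noncomputable instance instSmon : (SFun X).Monoidal := (Score X).toMonoidal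

noncomputable instance instLmon : (LFun X).Monoidal :=
  Monoidal.fromInducedMonoidal (LFun X) (fData X)


section Ext

variable {C : Type u₁} {D : Type u₂} [Category.{v₁} C] [Category.{v₂} D]
  [MonoidalCategory C] [MonoidalCategory D] {F : C ⥤ D}

theorem laxMonoidal_ext (m₁ m₂ : F.LaxMonoidal)
    (hε : (Functor.LaxMonoidal.ε (self := m₁) F) = (Functor.LaxMonoidal.ε (self := m₂) F)) (hμ : ∀ x y, (Functor.LaxMonoidal.μ (self := m₁) F) x y = (Functor.LaxMonoidal.μ (self := m₂) F) x y) : m₁ = m₂ := by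
  cases m₁
  cases m₂
  dsimp at hε hμ
  subst hε
  have : ∀ {a b : ∀ x y : C, F.obj x ⊗ F.obj y ⟶ F.obj (x ⊗ y)},
      (∀ x y, a x y = b x y) → a = b := fun h => funext fun x => funext fun y => h x y
  have hμ' := this hμ
  subst hμ'
  rfl

theorem oplaxMonoidal_ext (m₁ m₂ : F.OplaxMonoidal)
    (hη : (Functor.OplaxMonoidal.η (self := m₁) F) = (Functor.OplaxMonoidal.η (self := m₂) F)) (hδ : ∀ x y, (Functor.OplaxMonoidal.δ (self := m₁) F) x y = (Functor.OplaxMonoidal.δ (self := m₂) F) x y) : m₁ = m₂ := by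
  cases m₁
  cases m₂
  dsimp at hη hδ
  subst hη
  have : ∀ {a b : ∀ x y : C, F.obj (x ⊗ y) ⟶ F.obj x ⊗ F.obj y},
      (∀ x y, a x y = b x y) → a = b := fun h => funext fun x => funext fun y => h x y
  have hδ' := this hδ
  subst hδ'
  rfl

theorem monoidal_ext (m₁ m₂ : F.Monoidal)
    (h : m₁.toLaxMonoidal = m₂.toLaxMonoidal) : m₁ = m₂ := by
  have hη : (Functor.OplaxMonoidal.η (self := m₁.toOplaxMonoidal) F) = (Functor.OplaxMonoidal.η (self := m₂.toOplaxMonoidal) F) := by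
    have e1 : (Functor.OplaxMonoidal.η (self := m₁.toOplaxMonoidal) F) ≫ (Functor.LaxMonoidal.ε (self := m₁.toLaxMonoidal) F) = 𝟙 _ := Functor.Monoidal.η_ε (self := m₁) F
    have e2 : (Functor.LaxMonoidal.ε (self := m₂.toLaxMonoidal) F) ≫ (Functor.OplaxMonoidal.η (self := m₂.toOplaxMonoidal) F) = 𝟙 _ := Functor.Monoidal.ε_η (self := m₂) F
    calc (Functor.OplaxMonoidal.η (self := m₁.toOplaxMonoidal) F) = (Functor.OplaxMonoidal.η (self := m₁.toOplaxMonoidal) F) ≫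
          ((Functor.LaxMonoidal.ε (self := m₂.toLaxMonoidal) F) ≫ (Functor.OplaxMonoidal.η (self := m₂.toOplaxMonoidal) F)) := by rw [e2, Category.comp_id]
      _ = ((Functor.OplaxMonoidal.η (self := m₁.toOplaxMonoidal) F) ≫ (Functor.LaxMonoidal.ε (self := m₁.toLaxMonoidal) F)) ≫ (Functor.OplaxMonoidal.η (self := m₂.toOplaxMonoidal) F) := by
          rw [h, Category.assoc]
      _ = (Functor.OplaxMonoidal.η (self := m₂.toOplaxMonoidal) F) := by rw [e1, Category.id_comp]
  have hδ : ∀ x y, (Functor.OplaxMonoidal.δ (self := m₁.toOplaxMonoidal) F) x y = (Functor.OplaxMonoidal.δ (self := m₂.toOplaxMonoidal) F) x y := by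
    intro x y
    have e1 : (Functor.LaxMonoidal.μ (self := m₁.toLaxMonoidal) F) x y ≫ (Functor.OplaxMonoidal.δ (self := m₁.toOplaxMonoidal) F) x y = 𝟙 _ := Functor.Monoidal.μ_δ (self := m₁) F x y
    have e2 : (Functor.OplaxMonoidal.δ (self := m₂.toOplaxMonoidal) F) x y ≫ (Functor.LaxMonoidal.μ (self := m₂.toLaxMonoidal) F) x y = 𝟙 _ := Functor.Monoidal.δ_μ (self := m₂) F x y
    calc (Functor.OplaxMonoidal.δ (self := m₁.toOplaxMonoidal) F) x y = ((Functor.OplaxMonoidal.δ (self := m₂.toOplaxMonoidal) F) x y ≫ (Functor.LaxMonoidal.μ (self := m₂.toLaxMonoidal) F) x y) ≫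
          (Functor.OplaxMonoidal.δ (self := m₁.toOplaxMonoidal) F) x y := by rw [e2, Category.id_comp]
      _ = (Functor.OplaxMonoidal.δ (self := m₂.toOplaxMonoidal) F) x y ≫ ((Functor.LaxMonoidal.μ (self := m₁.toLaxMonoidal) F) x y ≫ (Functor.OplaxMonoidal.δ (self := m₁.toOplaxMonoidal) F) x y) := by
          rw [h, Category.assoc]
      _ = (Functor.OplaxMonoidal.δ (self := m₂.toOplaxMonoidal) F) x y := by rw [e1, Category.comp_id]
  have ho : m₁.toOplaxMonoidal = m₂.toOplaxMonoidal := oplaxMonoidal_ext _ _ hη hδ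
  cases m₁
  cases m₂
  dsimp at h ho
  subst h
  subst ho
  rfl

end Ext


theorem comp_eq :
    (StrongMonoidalFunctor.comp ⟨SFun X, inferInstance⟩ ⟨LFun X, inferInstance⟩ :
      StrongMonoidalFunctor X X) = StrongMonoidalFunctor.id X := by
  refine strongMonoidalFunctor_ext ?_ ?_
  · rfl
  apply heq_of_eq
  apply monoidal_ext
  apply laxMonoidal_ext
  · show Functor.LaxMonoidal.ε (LFun X) ≫ (LFun X).map (Functor.LaxMonoidal.ε (SFun X)) =
      𝟙 (𝟙_ X)
    show 𝟙 (𝟙_ X) ≫ (𝟙 (𝟙_ X) : tL X [] ⟶ tL X [𝟙_ X]) = 𝟙 (𝟙_ X)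
    simp
  · intro x y
    show Functor.LaxMonoidal.μ (LFun X) [x] [y] ≫
        (LFun X).map (Functor.LaxMonoidal.μ (SFun X) x y) = 𝟙 (x ⊗ y)
    show μL X [x] [y] ≫ (𝟙 (x ⊗ y) : tL X ([x] ++ [y]) ⟶ tL X [x ⊗ y]) = 𝟙 (x ⊗ y)
    simp
    exact Category.id_comp _

end MacLaneStrictify

/-- MacLane strictification with a strict monoidal retraction: every monoidal category
is a monoidal retract of a strict monoidal category via an underlying equivalence. -/
theorem exists_strictification_with_retraction
    (X : Type u) [Category.{v} X] [MonoidalCategory X] :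
    ∃ (Q : Type u) (iQ : Category.{v} Q) (mQ : @MonoidalCategory Q iQ),
      @IsStrictificationWithRetraction X _ _ Q iQ mQ := by
  open MacLaneStrictify in
  refine ⟨List X, inferInstance, inferInstance, ?_, ⟨LFun X, inferInstance⟩,
    ⟨SFun X, inferInstance⟩, comp_eq, inferInstance⟩
  exact ⟨fun a b c => ⟨List.append_assoc a b c, by simp⟩,
    fun a => ⟨List.nil_append a, by simp⟩,
    fun a => ⟨List.append_nil a, by simp⟩⟩
end

section
/- There exist a small strict monoidal category M and a strong monoidal functor E : M ⥤ M with E ∘ E = E (equality of strong monoidal functors) such that the idempotent E does not split in the category of small strict monoidal categories and strong monoidal functors: there is no small strict monoidal category N with strong monoidal functors R : M ⥤ N and I : N ⥤ M satisfying R ∘ I = 𝟭_N and I ∘ R = E. -/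
open CategoryTheory MonoidalCategory

universe v v₁ v₂ v₃ u u₁ u₂ u₃

/-- The idempotent strong monoidal endofunctor `E` of `M` splits through the small strict
monoidal category `N`: there are strong monoidal functors `R : M ⥤ N` and `I : N ⥤ M`
with `R ∘ I = 𝟭 N` and `I ∘ R = E`. -/
def SplitsAt (M : Type) [Category.{0} M] [MonoidalCategory M]
    (E : StrongMonoidalFunctor M M)
    (N : Type) [Category.{0} N] [MonoidalCategory N] : Prop :=
  MonoidalIsStrict N ∧
  ∃ (R : StrongMonoidalFunctor M N) (I : StrongMonoidalFunctor N M),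
    I.comp R = StrongMonoidalFunctor.id N ∧ R.comp I = E

section Ext
variable {C : Type u1} {D : Type u2} [Category.{w1} C] [Category.{w2} D]
  [MonoidalCategory C] [MonoidalCategory D]

theorem lax_ext {F : C ⥤ D} (l₁ l₂ : F.LaxMonoidal)
    (hε : @Functor.LaxMonoidal.ε _ _ _ _ _ _ F l₁ = @Functor.LaxMonoidal.ε _ _ _ _ _ _ F l₂)
    (hμ : ∀ X Y, @Functor.LaxMonoidal.μ _ _ _ _ _ _ F l₁ X Y =
      @Functor.LaxMonoidal.μ _ _ _ _ _ _ F l₂ X Y) : l₁ = l₂ := by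
  obtain ⟨e₁, m₁, _, _, _, _, _⟩ := l₁
  obtain ⟨e₂, m₂, _, _, _, _, _⟩ := l₂
  dsimp at hε hμ
  subst hε
  obtain rfl : m₁ = m₂ := funext fun X => funext fun Y => hμ X Y
  rfl

theorem oplax_determined {F : C ⥤ D} [l : F.LaxMonoidal] (o₁ o₂ : F.OplaxMonoidal)
    (b₁ : @Functor.OplaxMonoidal.η _ _ _ _ _ _ F o₁ ≫ Functor.LaxMonoidal.ε F = 𝟙 _)
    (a₂ : Functor.LaxMonoidal.ε F ≫ @Functor.OplaxMonoidal.η _ _ _ _ _ _ F o₂ = 𝟙 _)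
    (e₁ : ∀ X Y, @Functor.OplaxMonoidal.δ _ _ _ _ _ _ F o₁ X Y ≫ Functor.LaxMonoidal.μ F X Y = 𝟙 _)
    (c₂ : ∀ X Y, Functor.LaxMonoidal.μ F X Y ≫ @Functor.OplaxMonoidal.δ _ _ _ _ _ _ F o₂ X Y = 𝟙 _) :
    o₁ = o₂ := by
  obtain ⟨η₁, δ₁, _, _, _, _, _⟩ := o₁
  obtain ⟨η₂, δ₂, _, _, _, _, _⟩ := o₂
  simp only [Functor.OplaxMonoidal.η, Functor.OplaxMonoidal.δ] at b₁ a₂ e₁ c₂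
  obtain rfl : η₁ = η₂ := by
    calc η₁ = η₁ ≫ 𝟙 _ := by simp
      _ = η₁ ≫ (Functor.LaxMonoidal.ε F ≫ η₂) := by rw [a₂]
      _ = (η₁ ≫ Functor.LaxMonoidal.ε F) ≫ η₂ := by simp
      _ = η₂ := by rw [b₁]; simp
  obtain rfl : δ₁ = δ₂ := by
    funext X Y
    calc δ₁ X Y = δ₁ X Y ≫ 𝟙 _ := by simp
      _ = δ₁ X Y ≫ (Functor.LaxMonoidal.μ F X Y ≫ δ₂ X Y) := by rw [c₂]
      _ = (δ₁ X Y ≫ Functor.LaxMonoidal.μ F X Y) ≫ δ₂ X Y := by simp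
      _ = δ₂ X Y := by rw [e₁]; simp
  rfl

theorem monoidal_eq_of_lax {F : C ⥤ D} (m₁ m₂ : F.Monoidal)
    (h : m₁.toLaxMonoidal = m₂.toLaxMonoidal) : m₁ = m₂ := by
  have ho : m₁.toOplaxMonoidal = m₂.toOplaxMonoidal := by
    refine oplax_determined (l := m₁.toLaxMonoidal) _ _ m₁.η_ε ?_ m₁.δ_μ ?_
    · rw [h]; exact m₂.ε_η
    · rw [h]; exact m₂.μ_δ
  cases m₁; cases m₂
  dsimp at h ho
  subst h; subst ho
  rfl

theorem eqToHom_self {E' : Type u3} [Category.{w3} E'] {X : E'} (p : X = X) :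
    eqToHom p = 𝟙 X := rfl

theorem strong_ext {F G : C ⥤ D} (mF : F.Monoidal) (mG : G.Monoidal) (h : F = G)
    (hε : (letI := mF; Functor.LaxMonoidal.ε F) ≫ eqToHom (by rw [h]) =
      (letI := mG; Functor.LaxMonoidal.ε G))
    (hμ : ∀ X Y, (letI := mF; Functor.LaxMonoidal.μ F X Y) ≫ eqToHom (by rw [h]) =
      eqToHom (by rw [h]) ≫ (letI := mG; Functor.LaxMonoidal.μ G X Y)) :
    (⟨F, mF⟩ : StrongMonoidalFunctor C D) = ⟨G, mG⟩ := by
  subst h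
  simp only [eqToHom_self, Category.comp_id, Category.id_comp] at hε hμ
  obtain rfl : mF = mG := monoidal_eq_of_lax _ _ (lax_ext _ _ hε hμ)
  rfl

end Ext
namespace NSplit
def Mo : Type := ℕ
instance : Add Mo := ⟨Nat.add⟩
instance (n : ℕ) : OfNat Mo n := ⟨n⟩
theorem Mo.add_assoc (a b c : Mo) : a + b + c = a + (b + c) := Nat.add_assoc a b c
theorem Mo.zero_add (a : Mo) : (0 : Mo) + a = a := Nat.zero_add a
theorem Mo.add_zero (a : Mo) : a + (0 : Mo) = a := rfl
def Pt (m : Mo) : Type := Fin m → ℕ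
instance : Category Mo where
  Hom m n := Pt m → Pt n
  id _ := _root_.id
  comp f g := g ∘ f
instance : Subsingleton (Pt (0 : Mo)) := ⟨fun _ _ => funext fun i => i.elim0⟩
theorem eqToHom_eval {m n : Mo} (h : m = n) (v : Pt m) (i : Fin n) :
    (eqToHom h : m ⟶ n) v i = v (Fin.cast (h.symm : (n : ℕ) = m) i) := by
  subst h; rfl
def sp (a b : Mo) : Pt (a + b) ≃ Pt a × Pt b where
  toFun v := (fun i => v (Fin.castAdd b i), fun j => v (Fin.natAdd a j))
  invFun p := Fin.addCases p.1 p.2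
  left_inv v := by
    funext i
    refine Fin.addCases (fun i₀ => ?_) (fun j₀ => ?_) i
    · exact Fin.addCases_left _
    · exact Fin.addCases_right _
  right_inv p := by
    refine Prod.ext (funext fun i => ?_) (funext fun i => ?_)
    · show Fin.addCases p.1 p.2 (Fin.castAdd b i) = p.1 i
      exact Fin.addCases_left _
    · show Fin.addCases p.1 p.2 (Fin.natAdd a i) = p.2 i
      exact Fin.addCases_right _

theorem spL (a b : Mo) (p : Pt a) (q : Pt b) (i : Fin a) :
    (sp a b).symm (p, q) (Fin.castAdd b i) = p i := by
  show Fin.addCases p q (Fin.castAdd b i) = p i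
  exact Fin.addCases_left i

theorem spR (a b : Mo) (p : Pt a) (q : Pt b) (j : Fin b) :
    (sp a b).symm (p, q) (Fin.natAdd a j) = q j := by
  show Fin.addCases p q (Fin.natAdd a j) = q j
  exact Fin.addCases_right j

def tens {a b c d : Mo} (f : a ⟶ b) (g : c ⟶ d) : (a + c : Mo) ⟶ (b + d : Mo) :=
  fun v => (sp b d).symm (f ((sp a c) v).1, g ((sp a c) v).2)

theorem tens_id (a b : Mo) : tens (𝟙 a) (𝟙 b) = 𝟙 (a + b : Mo) := by
  funext v
  show (sp a b).symm (((sp a b) v).1, ((sp a b) v).2) = v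
  simp

theorem tens_comp {a b c a' b' c' : Mo} (f : a ⟶ b) (g : b ⟶ c) (f' : a' ⟶ b') (g' : b' ⟶ c') :
    tens (f ≫ g) (f' ≫ g') = tens f f' ≫ tens g g' := by
  funext v
  show _ = tens g g' (tens f f' v)
  simp [tens]
  exact ⟨rfl, rfl⟩

theorem coh (a b c : Mo) (p : Pt a) (q : Pt b) (r : Pt c) :
    (eqToHom (Mo.add_assoc a b c) : (a + b + c : Mo) ⟶ (a + (b + c) : Mo))
        ((sp (a + b) c).symm ((sp a b).symm (p, q), r)) =
      (sp a (b + c)).symm (p, (sp b c).symm (q, r)) := by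
  funext i
  rw [eqToHom_eval]
  refine Fin.addCases (fun i₀ => ?_) (fun j => ?_) i
  · have : Fin.cast ((Mo.add_assoc a b c).symm : ((a : ℕ) + (b + c)) = (a + b + c)) (Fin.castAdd (b + c) i₀)
        = Fin.castAdd c (Fin.castAdd b i₀) := by
      apply Fin.ext; rfl
    rw [this]
    exact ((spL (a+b) c _ r (Fin.castAdd b i₀)).trans (spL a b p q i₀)).trans (spL a (b+c) p _ i₀).symm
  · refine Fin.addCases (fun j₀ => ?_) (fun j₁ => ?_) j
    · have : Fin.cast ((Mo.add_assoc a b c).symm : ((a : ℕ) + (b + c)) = (a + b + c)) (Fin.natAdd a (Fin.castAdd c j₀))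
          = Fin.castAdd c (Fin.natAdd a j₀) := by
        apply Fin.ext; rfl
      rw [this]
      exact ((spL (a+b) c _ r (Fin.natAdd a j₀)).trans (spR a b p q j₀)).trans
        ((spR a (b+c) p _ (Fin.castAdd c j₀)).trans (spL b c q r j₀)).symm
    · have : Fin.cast ((Mo.add_assoc a b c).symm : ((a : ℕ) + (b + c)) = (a + b + c)) (Fin.natAdd a (Fin.natAdd b j₁))
          = Fin.natAdd (a + b) j₁ := by
        apply Fin.ext; exact (Nat.add_assoc _ _ _).symm
      rw [this]
      exact (spR (a+b) c _ r j₁).trans ((spR a (b+c) p _ (Fin.natAdd b j₁)).trans (spR b c q r j₁)).symm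

theorem tens_assoc {X₁ X₂ X₃ Y₁ Y₂ Y₃ : Mo} (f₁ : X₁ ⟶ Y₁) (f₂ : X₂ ⟶ Y₂) (f₃ : X₃ ⟶ Y₃) :
    tens (tens f₁ f₂) f₃ ≫ eqToHom (Mo.add_assoc Y₁ Y₂ Y₃) =
      eqToHom (Mo.add_assoc X₁ X₂ X₃) ≫ tens f₁ (tens f₂ f₃) := by
  funext v
  obtain ⟨⟨x, r⟩, rfl⟩ := (sp (X₁ + X₂) X₃).symm.surjective v
  obtain ⟨⟨p, q⟩, rfl⟩ := (sp X₁ X₂).symm.surjective x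
  have h1 : tens (tens f₁ f₂) f₃ ((sp (X₁ + X₂) X₃).symm ((sp X₁ X₂).symm (p, q), r)) =
      (sp (Y₁ + Y₂) Y₃).symm ((sp Y₁ Y₂).symm (f₁ p, f₂ q), f₃ r) := by
    simp [tens]
  have key : eqToHom (Mo.add_assoc Y₁ Y₂ Y₃)
        (tens (tens f₁ f₂) f₃ ((sp (X₁ + X₂) X₃).symm ((sp X₁ X₂).symm (p, q), r))) =
      tens f₁ (tens f₂ f₃)
        (eqToHom (Mo.add_assoc X₁ X₂ X₃) ((sp (X₁ + X₂) X₃).symm ((sp X₁ X₂).symm (p, q), r))) := by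
    rw [h1, coh, coh]
    simp [tens]
  exact key

theorem spzero (b : Mo) (u : Pt 0) (y : Pt b) :
    (sp 0 b).symm (u, y) = (eqToHom (Mo.zero_add b).symm : b ⟶ ((0 : Mo) + b : Mo)) y := by
  rw [Equiv.symm_apply_eq]
  refine Prod.ext (Subsingleton.elim _ _) ?_
  funext j
  show y j = (eqToHom (Mo.zero_add b).symm y : Pt ((0 : Mo) + b)) (Fin.natAdd 0 j)
  rw [eqToHom_eval]
  congr 1
  apply Fin.ext; exact (Nat.zero_add _).symm

theorem sp0snd (b : Mo) (v : Pt ((0 : Mo) + b)) :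
    ((sp 0 b) v).2 = (eqToHom (Mo.zero_add b) : ((0 : Mo) + b : Mo) ⟶ b) v := by
  funext j
  rw [eqToHom_eval]
  show v (Fin.natAdd 0 j) = _
  congr 1
  apply Fin.ext; exact Nat.zero_add _

theorem spzero' (a : Mo) (y : Pt a) (u : Pt 0) :
    (sp a 0).symm (y, u) = y := by
  funext i
  refine Fin.addCases (fun i₀ => ?_) (fun j => j.elim0) i
  have h : Fin.castAdd 0 i₀ = i₀ := by apply Fin.ext; rfl
  show Fin.addCases y u (Fin.castAdd 0 i₀) = y (Fin.castAdd 0 i₀)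
  erw [Fin.addCases_left, h]

theorem spfst (a : Mo) (v : Pt (a + 0)) : ((sp a 0) v).1 = v := by
  funext i
  show v (Fin.castAdd 0 i) = v i
  have h : Fin.castAdd 0 i = i := by apply Fin.ext; rfl
  rw [h]

theorem tens_eqToHom {a b c d : Mo} (h : a = b) (h' : c = d) :
    tens (eqToHom h) (eqToHom h') = eqToHom (by rw [h, h'] : (a + c : Mo) = (b + d : Mo)) := by
  subst h; subst h'
  simpa using tens_id a c

theorem tens_eqToHom_id {a b : Mo} (h : a = b) (c : Mo) :
    tens (eqToHom h) (𝟙 c) = eqToHom (by rw [h] : (a + c : Mo) = (b + c : Mo)) := by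
  subst h; simpa using tens_id a c

theorem tens_id_eqToHom (c : Mo) {a b : Mo} (h : a = b) :
    tens (𝟙 c) (eqToHom h) = eqToHom (by rw [h] : (c + a : Mo) = (c + b : Mo)) := by
  subst h; simpa using tens_id c a

theorem tens_zero_left {a b : Mo} (f : a ⟶ b) :
    tens (𝟙 (0 : Mo)) f = eqToHom (Mo.zero_add a) ≫ f ≫ eqToHom (Mo.zero_add b).symm := by
  funext v
  show (sp 0 b).symm (𝟙 (0 : Mo) ((sp 0 a v).1), f ((sp 0 a v).2)) =
    eqToHom (Mo.zero_add b).symm (f (eqToHom (Mo.zero_add a) v))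
  rw [spzero, sp0snd]

instance : MonoidalCategoryStruct Mo where
  tensorObj a b := a + b
  whiskerLeft X _ _ f := tens (𝟙 X) f
  whiskerRight f Y := tens f (𝟙 Y)
  tensorHom f g := tens f g
  tensorUnit := 0
  associator a b c := eqToIso (Mo.add_assoc a b c)
  leftUnitor a := eqToIso (Mo.zero_add a)
  rightUnitor a := eqToIso (Mo.add_zero a)

@[simp] theorem tensorObj_eq (a b : Mo) : a ⊗ b = a + b := rfl
@[simp] theorem tensorHom_eq {a b c d : Mo} (f : a ⟶ b) (g : c ⟶ d) : f ⊗ₘ g = tens f g := rfl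
@[simp] theorem whiskerLeft_eq (X : Mo) {c d : Mo} (g : c ⟶ d) : X ◁ g = tens (𝟙 X) g := rfl
@[simp] theorem whiskerRight_eq {a b : Mo} (f : a ⟶ b) (Y : Mo) : f ▷ Y = tens f (𝟙 Y) := rfl
@[simp] theorem unit_eq : 𝟙_ Mo = (0 : Mo) := rfl
@[simp] theorem assoc_hom_eq (a b c : Mo) : (α_ a b c).hom = eqToHom (Mo.add_assoc a b c) := rfl
@[simp] theorem assoc_inv_eq (a b c : Mo) : (α_ a b c).inv = eqToHom (Mo.add_assoc a b c).symm := by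
  simp [eqToIso.inv]
  rfl
@[simp] theorem lu_hom_eq (a : Mo) : (λ_ a).hom = eqToHom (Mo.zero_add a) := rfl
@[simp] theorem ru_hom_eq (a : Mo) : (ρ_ a).hom = eqToHom (Mo.add_zero a) := rfl

theorem tens_zero_right {a b : Mo} (f : a ⟶ b) :
    tens f (𝟙 (0 : Mo)) = eqToHom (Mo.add_zero a) ≫ f ≫ eqToHom (Mo.add_zero b).symm := by
  funext v
  show (sp b 0).symm (f ((sp a 0 v).1), 𝟙 (0 : Mo) ((sp a 0 v).2)) =
    eqToHom (Mo.add_zero b).symm (f (eqToHom (Mo.add_zero a) v))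
  rw [spzero', spfst]
  rfl

instance : MonoidalCategory Mo where
  tensorHom_def f g := by
    show tens f g = tens f (𝟙 _) ≫ tens (𝟙 _) g
    rw [← tens_comp]
    simp
  id_tensorHom_id := tens_id
  tensorHom_comp_tensorHom f₁ f₂ g₁ g₂ := (tens_comp f₁ g₁ f₂ g₂).symm
  whiskerLeft_id X Y := tens_id X Y
  id_whiskerRight X Y := tens_id X Y
  associator_naturality f₁ f₂ f₃ := by
    simpa using tens_assoc f₁ f₂ f₃
  leftUnitor_naturality {a b} f := by
    simp only [whiskerLeft_eq, lu_hom_eq, unit_eq]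
    rw [tens_zero_left]
    simp
  rightUnitor_naturality {a b} f := by
    simp only [whiskerRight_eq, ru_hom_eq, unit_eq]
    rw [tens_zero_right]
    simp
  pentagon W X Y Z := by
    simp only [whiskerRight_eq, whiskerLeft_eq, assoc_hom_eq, tensorObj_eq,
      tens_eqToHom_id, tens_id_eqToHom, eqToHom_trans]
  triangle X Y := by
    simp only [whiskerRight_eq, whiskerLeft_eq, assoc_hom_eq, lu_hom_eq, ru_hom_eq,
      unit_eq, tensorObj_eq, tens_eqToHom_id, tens_id_eqToHom, eqToHom_trans]

theorem Mo_strict : MonoidalIsStrict Mo :=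
  ⟨fun a b c => ⟨Mo.add_assoc a b c, rfl⟩,
   fun a => ⟨Mo.zero_add a, rfl⟩,
   fun a => ⟨Mo.add_zero a, rfl⟩⟩

@[simp] theorem comp_eval {a b c : Mo} (f : a ⟶ b) (g : b ⟶ c) (v : Pt a) :
    (f ≫ g) v = g (f v) := rfl
@[simp] theorem id_eval (a : Mo) (v : Pt a) : (𝟙 a : a ⟶ a) v = v := rfl
theorem tens_eval {a b c d : Mo} (f : a ⟶ b) (g : c ⟶ d) (v : Pt (a + c)) :
    tens f g v = (sp b d).symm (f ((sp a c v).1), g ((sp a c v).2)) := rfl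
@[simp] theorem eqToHom_cancel {m n : Mo} (h : m = n) (y : Pt n) :
    eqToHom h ((eqToHom h.symm : n ⟶ m) y) = y := by subst h; rfl
@[simp] theorem eqToHom_cancel' {m n : Mo} (h : m = n) (y : Pt m) :
    (eqToHom h.symm : n ⟶ m) (eqToHom h y) = y := by subst h; rfl

/-- `ℕ^1 ≃ ℕ` -/
def one : Pt (1 : Mo) ≃ ℕ := Equiv.funUnique (Fin 1) ℕ

/-- coherent equivalences `ℕ ≃ ℕ^(k+1)` -/
def W : (k : ℕ) → (ℕ ≃ Pt ((k + 1 : ℕ) : Mo))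
  | 0 => one.symm
  | (k+1) => Nat.pairEquiv.symm.trans (((W k).prodCongr one.symm).trans (sp (((k+1 : ℕ)) : Mo) 1).symm)

/-- object part of the idempotent `E` -/
def Eobj (m : Mo) : Mo := Nat.casesOn m (0 : Mo) (fun _ => (1 : Mo))

/-- realization equivalences: `Eobj m` and `m` realize the same set. -/
def d : (m : Mo) → (Pt (Eobj m) ≃ Pt m)
  | (0 : ℕ) => Equiv.refl _
  | (1 : ℕ) => Equiv.refl _
  | ((k+2 : ℕ) : ℕ) => one.trans (W (k+1))

theorem d_zero : d (0 : Mo) = Equiv.refl _ := rfl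
theorem d_one : d (1 : Mo) = Equiv.refl _ := rfl

/-- the functor `E`. -/
@[reducible] def Ef : Mo ⥤ Mo where
  obj := Eobj
  map {a b} f := ((d b).symm ∘ f ∘ (d a) : Pt (Eobj a) → Pt (Eobj b))
  map_id a := by
    funext v
    show (d a).symm (d a v) = v
    simp
  map_comp {a b c} f g := by
    funext v
    show (d c).symm (g (f (d a v))) = (d c).symm (g (d b ((d b).symm (f (d a v)))))
    simp

@[simp] theorem Ef_obj (m : Mo) : Ef.obj m = Eobj m := rfl
theorem Ef_map {a b : Mo} (f : a ⟶ b) (v : Pt (Eobj a)) :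
    Ef.map f v = (d b).symm (f (d a v)) := rfl

/-- the structure isomorphisms of `E`, as equivalences. -/
def μEq (a b : Mo) : Pt (Eobj a + Eobj b) ≃ Pt (Eobj (a + b)) :=
  (sp (Eobj a) (Eobj b)).trans ((((d a).prodCongr (d b)).trans (sp a b).symm).trans (d (a + b)).symm)

theorem μEq_eval (a b : Mo) (v : Pt (Eobj a + Eobj b)) :
    μEq a b v = (d (a + b)).symm ((sp a b).symm (d a ((sp (Eobj a) (Eobj b) v).1),
      d b ((sp (Eobj a) (Eobj b) v).2))) := rfl

/-- isomorphisms in `Mo` from equivalences of realizations. -/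
def isoOfEquiv {a b : Mo} (e : Pt a ≃ Pt b) : a ≅ b where
  hom := (e : Pt a → Pt b)
  inv := (e.symm : Pt b → Pt a)
  hom_inv_id := by funext v; show e.symm (e v) = v; simp
  inv_hom_id := by funext v; show e (e.symm v) = v; simp

@[simp] theorem isoOfEquiv_hom {a b : Mo} (e : Pt a ≃ Pt b) : (isoOfEquiv e).hom = ⇑e := rfl
@[simp] theorem isoOfEquiv_inv {a b : Mo} (e : Pt a ≃ Pt b) : (isoOfEquiv e).inv = ⇑e.symm := rfl
@[simp] theorem eqToHom_add_zero (a : Mo) : (eqToHom (Mo.add_zero a) : (a + 0 : Mo) ⟶ a) = 𝟙 a := rfl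

set_option maxHeartbeats 1000000 in
def Ecore : Ef.CoreMonoidal where
  εIso := eqToIso rfl
  μIso a b := isoOfEquiv (μEq a b)
  μIso_hom_natural_left {X Y} f X' := by
    funext v
    simp only [comp_eval, isoOfEquiv_hom, whiskerRight_eq, Ef_obj]
    show μEq Y X' (tens (Ef.map f) (𝟙 (Eobj X')) v) =
      Ef.map (tens f (𝟙 X')) (μEq X X' v)
    simp [μEq_eval, tens_eval, Ef_map]
  μIso_hom_natural_right {X Y} X' f := by
    funext v
    simp only [comp_eval, isoOfEquiv_hom, whiskerLeft_eq, Ef_obj]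
    show μEq X' Y (tens (𝟙 (Eobj X')) (Ef.map f) v) =
      Ef.map (tens (𝟙 X') f) (μEq X' X v)
    simp [μEq_eval, tens_eval, Ef_map]
  associativity X Y Z := by
    funext v
    obtain ⟨⟨x, r⟩, rfl⟩ := (sp (Eobj X + Eobj Y) (Eobj Z)).symm.surjective v
    obtain ⟨⟨p, q⟩, rfl⟩ := (sp (Eobj X) (Eobj Y)).symm.surjective x
    simp only [comp_eval, isoOfEquiv_hom, whiskerRight_eq, whiskerLeft_eq, Ef_obj,
      tensorObj_eq, assoc_hom_eq]
    simp [μEq_eval, tens_eval, Ef_map, coh]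
  left_unitality X := by
    funext v
    obtain ⟨⟨u, y⟩, rfl⟩ := (sp (0 : Mo) (Eobj X)).symm.surjective v
    simp only [comp_eval, isoOfEquiv_hom, whiskerRight_eq, lu_hom_eq, unit_eq, Ef_obj,
      eqToIso_refl, Iso.refl_hom]
    simp [μEq_eval, tens_eval, Ef_map, spzero, sp0snd, d_zero]
  right_unitality X := by
    funext v
    obtain ⟨⟨y, u⟩, rfl⟩ := (sp (Eobj X) (0 : Mo)).symm.surjective v
    simp only [comp_eval, isoOfEquiv_hom, whiskerLeft_eq, ru_hom_eq, unit_eq, Ef_obj,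
      eqToIso_refl, Iso.refl_hom]
    simp [μEq_eval, tens_eval, Ef_map, spzero', spfst, d_zero]

def Emon : Ef.Monoidal := Ecore.toMonoidal
def Estrong : StrongMonoidalFunctor Mo Mo := ⟨Ef, Emon⟩

def dIso (m : Mo) : (Eobj m : Mo) ≅ m := isoOfEquiv (d m)

theorem Ef_map_eq {a b : Mo} (f : a ⟶ b) :
    Ef.map f = (dIso a).hom ≫ f ≫ (dIso b).inv := rfl

theorem EE (m : Mo) : Eobj (Eobj m) = Eobj m := by cases m <;> rfl
theorem dIso_Eobj_hom (m : Mo) : (dIso (Eobj m)).hom = eqToHom (EE m) := by cases m <;> rfl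
theorem dIso_Eobj_inv (m : Mo) : (dIso (Eobj m)).inv = eqToHom (EE m).symm := by cases m <;> rfl

theorem Ef_idem : Ef ⋙ Ef = Ef := by
  refine CategoryTheory.Functor.ext EE ?_
  intro a b f
  show Ef.map (Ef.map f) = _
  rw [Ef_map_eq (Ef.map f)]
  simp only [Ef_obj]
  rw [dIso_Eobj_hom, dIso_Eobj_inv]

theorem muEE (a b : Mo) :
    (⇑(μEq (Eobj a) (Eobj b)) : (Eobj (Eobj a) + Eobj (Eobj b) : Mo) ⟶ (Eobj (Eobj a + Eobj b) : Mo))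
        ≫ Ef.map ⇑(μEq a b) =
      eqToHom (by rw [EE a, EE b]) ≫ ⇑(μEq a b) ≫ eqToHom (EE (a + b)).symm := by
  rw [Ef_map_eq]
  rw [show (⇑(μEq (Eobj a) (Eobj b)) : (Eobj (Eobj a) + Eobj (Eobj b) : Mo) ⟶ (Eobj (Eobj a + Eobj b) : Mo)) =
    tens (dIso (Eobj a)).hom (dIso (Eobj b)).hom ≫ (dIso (Eobj a + Eobj b)).inv from rfl]
  rw [dIso_Eobj_hom, dIso_Eobj_hom, dIso_Eobj_inv, tens_eqToHom]
  simp

theorem E_idem : StrongMonoidalFunctor.comp Estrong Estrong = Estrong := by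
  refine strong_ext _ _ Ef_idem ?_ ?_
  · funext v
    exact @Subsingleton.elim (Pt (0 : Mo)) _ _ _
  · intro a b
    show (⇑(μEq (Eobj a) (Eobj b)) ≫ Ef.map ⇑(μEq a b)) ≫ eqToHom _ = eqToHom _ ≫ ⇑(μEq a b)
    rw [muEE]
    simp
    erw [eqToHom_trans, eqToHom_refl, Category.comp_id]

section MonLemmas
variable {C : Type u1} [Category.{w1} C] [MonoidalCategory C]

theorem tensor_eqToHom {a b c d : C} (h : a = b) (h' : c = d) :
    (eqToHom h ⊗ₘ eqToHom h') = eqToHom (by rw [h, h']) := by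
  subst h; subst h'; simp

theorem tensor_eqToHom_id {a b : C} (h : a = b) (c : C) :
    (eqToHom h ⊗ₘ 𝟙 c) = eqToHom (by rw [h]) := by
  subst h; simp

theorem id_tensor_eqToHom (c : C) {a b : C} (h : a = b) :
    (𝟙 c ⊗ₘ eqToHom h) = eqToHom (by rw [h]) := by
  subst h; simp

theorem tens_conj_right {a₁ a₂ a₃ a₄ c₁ c₂ : C} (u : a₁ ⟶ a₂) (h₁ : a₃ = a₁) (h₂ : a₂ = a₄)
    (w : c₁ ⟶ c₂) :
    (eqToHom h₁ ≫ u ≫ eqToHom h₂) ⊗ₘ w =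
      (eqToHom h₁ ⊗ₘ 𝟙 c₁) ≫ (u ⊗ₘ w) ≫ (eqToHom h₂ ⊗ₘ 𝟙 c₂) := by
  subst h₁; subst h₂; simp

theorem tens_conj_left {a₁ a₂ a₃ a₄ c₁ c₂ : C} (u : a₁ ⟶ a₂) (h₁ : a₃ = a₁) (h₂ : a₂ = a₄)
    (w : c₁ ⟶ c₂) :
    w ⊗ₘ (eqToHom h₁ ≫ u ≫ eqToHom h₂) =
      (𝟙 c₁ ⊗ₘ eqToHom h₁) ≫ (w ⊗ₘ u) ≫ (𝟙 c₂ ⊗ₘ eqToHom h₂) := by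
  subst h₁; subst h₂; simp

theorem conj_of_assoc_nat {x y z : C} (hα : (x ⊗ y) ⊗ z = x ⊗ (y ⊗ z))
    (hαhom : (α_ x y z).hom = eqToHom hα) (f : x ⟶ x) (g : y ⟶ y) (h : z ⟶ z) :
    (f ⊗ₘ g) ⊗ₘ h = eqToHom hα ≫ (f ⊗ₘ (g ⊗ₘ h)) ≫ eqToHom hα.symm := by
  have key := MonoidalCategory.associator_naturality (C := C) f g h
  rw [hαhom] at key
  have : ((f ⊗ₘ g) ⊗ₘ h) ≫ eqToHom hα ≫ eqToHom hα.symm =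
      (eqToHom hα ≫ (f ⊗ₘ g ⊗ₘ h)) ≫ eqToHom hα.symm := by
    rw [← Category.assoc, key]
  simpa using this

end MonLemmas

theorem tp_assoc {C : Type u1} [Category.{w1} C] [MonoidalCategory C] {n : C}
    (hnn : n ⊗ n = n) (hα : (n ⊗ n) ⊗ n = n ⊗ (n ⊗ n)) (hαhom : (α_ n n n).hom = eqToHom hα)
    (f g h : n ⟶ n) :
    (eqToHom hnn.symm ≫ ((eqToHom hnn.symm ≫ (f ⊗ₘ g) ≫ eqToHom hnn) ⊗ₘ h) ≫ eqToHom hnn) =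
    (eqToHom hnn.symm ≫ (f ⊗ₘ (eqToHom hnn.symm ≫ (g ⊗ₘ h) ≫ eqToHom hnn)) ≫ eqToHom hnn) := by
  rw [tens_conj_right, tens_conj_left, tensor_eqToHom_id, tensor_eqToHom_id,
    id_tensor_eqToHom, id_tensor_eqToHom, conj_of_assoc_nat hα hαhom]
  simp

section Split
variable {N : Type} [Category.{0} N] [MonoidalCategory N]
variable (If : N ⥤ Mo) [If.Monoidal]
variable (n : N) (hIn : If.obj n = (1 : Mo)) (hnn : n ⊗ n = n)

include hIn hnn in
theorem h1nn : If.obj (n ⊗ n) = (1 : Mo) := by rw [hnn, hIn]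
include hIn in
theorem h2 : (2 : Mo) = If.obj n ⊗ If.obj n := by rw [hIn]; rfl

/-- conjugation to endomorphisms of the object `1` of `Mo` -/
def Phi (f : n ⟶ n) : (1 : Mo) ⟶ (1 : Mo) := eqToHom hIn.symm ≫ If.map f ≫ eqToHom hIn

def bh : (2 : Mo) ⟶ (1 : Mo) :=
  eqToHom (h2 If n hIn) ≫ Functor.LaxMonoidal.μ If n n ≫ eqToHom (h1nn If n hIn hnn)

def bhi : (1 : Mo) ⟶ (2 : Mo) :=
  eqToHom (h1nn If n hIn hnn).symm ≫ Functor.OplaxMonoidal.δ If n n ≫ eqToHom (h2 If n hIn).symm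

theorem bh_bhi : bh If n hIn hnn ≫ bhi If n hIn hnn = 𝟙 (2 : Mo) := by
  simp [bh, bhi]

theorem bhi_bh : bhi If n hIn hnn ≫ bh If n hIn hnn = 𝟙 (1 : Mo) := by
  simp [bh, bhi]

theorem tens_conj_both {C : Type u1} [Category.{w1} C] [MonoidalCategory C]
    {a₁ a₂ b₁ b₂ c₁ c₂ d₁ d₂ : C} (u : a₁ ⟶ a₂) (v : b₁ ⟶ b₂)
    (h₁ : c₁ = a₁) (h₂ : a₂ = c₂) (h₃ : d₁ = b₁) (h₄ : b₂ = d₂) :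
    (eqToHom h₁ ≫ u ≫ eqToHom h₂) ⊗ₘ (eqToHom h₃ ≫ v ≫ eqToHom h₄) =
      eqToHom (by rw [h₁, h₃]) ≫ (u ⊗ₘ v) ≫ eqToHom (by rw [h₂, h₄]) := by
  subst h₁; subst h₂; subst h₃; subst h₄; simp

theorem P2 (f g : n ⟶ n) :
    Phi If n hIn (eqToHom hnn.symm ≫ (f ⊗ₘ g) ≫ eqToHom hnn) =
      bhi If n hIn hnn ≫ (Phi If n hIn f ⊗ₘ Phi If n hIn g) ≫ bh If n hIn hnn := by
  unfold Phi bh bhi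
  rw [tens_conj_both]
  simp only [Functor.map_comp, eqToHom_map, Category.assoc, eqToHom_trans,
    eqToHom_trans_assoc, eqToHom_self, Category.id_comp]
  rw [Functor.LaxMonoidal.μ_natural_assoc]
  simp

/-- tensor collapsed to an operation on endomorphisms of `n` -/
def tp (f g : n ⟶ n) : n ⟶ n := eqToHom hnn.symm ≫ (f ⊗ₘ g) ≫ eqToHom hnn

/-- the induced binary operation on endomorphisms of `1` in `Mo` -/
def bop (u v : (1 : Mo) ⟶ (1 : Mo)) : (1 : Mo) ⟶ (1 : Mo) :=
  bhi If n hIn hnn ≫ (u ⊗ₘ v) ≫ bh If n hIn hnn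

theorem bop_assoc
    (S : ((1 : Mo) ⟶ (1 : Mo)) → (n ⟶ n))
    (hP1 : ∀ c : (1 : Mo) ⟶ (1 : Mo), Phi If n hIn (S c) = c)
    (hα : (n ⊗ n) ⊗ n = n ⊗ (n ⊗ n)) (hαhom : (α_ n n n).hom = eqToHom hα)
    (u v w : (1 : Mo) ⟶ (1 : Mo)) :
    bop If n hIn hnn (bop If n hIn hnn u v) w = bop If n hIn hnn u (bop If n hIn hnn v w) := by
  have e2 : ∀ f g : n ⟶ n,
      bop If n hIn hnn (Phi If n hIn f) (Phi If n hIn g) = Phi If n hIn (tp n hnn f g) :=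
    fun f g => (P2 If n hIn hnn f g).symm
  have e3 : tp n hnn (tp n hnn (S u) (S v)) (S w) = tp n hnn (S u) (tp n hnn (S v) (S w)) :=
    tp_assoc hnn hα hαhom _ _ _
  calc bop If n hIn hnn (bop If n hIn hnn u v) w
      = bop If n hIn hnn (bop If n hIn hnn (Phi If n hIn (S u)) (Phi If n hIn (S v)))
          (Phi If n hIn (S w)) := by rw [hP1, hP1, hP1]
    _ = Phi If n hIn (tp n hnn (tp n hnn (S u) (S v)) (S w)) := by rw [e2, e2]
    _ = Phi If n hIn (tp n hnn (S u) (tp n hnn (S v) (S w))) := by rw [e3]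
    _ = bop If n hIn hnn (Phi If n hIn (S u)) (bop If n hIn hnn (Phi If n hIn (S v))
          (Phi If n hIn (S w))) := by rw [e2, e2]
    _ = bop If n hIn hnn u (bop If n hIn hnn v w) := by rw [hP1, hP1, hP1]

end Split

/-- constants as endomorphisms of `1` -/
def cst (p : ℕ) : (1 : Mo) ⟶ (1 : Mo) := fun _ _ => p

def z1 : Fin ((1 : Mo) : ℕ) := ⟨0, Nat.one_pos⟩

def vec2 (p q : ℕ) : Pt (2 : Mo) :=
  (sp 1 1).symm ((fun _ => p : Pt (1 : Mo)), (fun _ => q : Pt (1 : Mo)))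

theorem cst_inj {p q : ℕ} (h : cst p = cst q) : p = q :=
  congrFun (congrFun h (fun _ => 0)) z1

section Split2
variable {N : Type} [Category.{0} N] [MonoidalCategory N]
variable (If : N ⥤ Mo) [If.Monoidal]
variable (n : N) (hIn : If.obj n = (1 : Mo)) (hnn : n ⊗ n = n)

/-- the bijective pairing on `ℕ` induced by the splitting -/
def Bf (p q : ℕ) : ℕ := bh If n hIn hnn (vec2 p q) z1

theorem bop_cst (p q : ℕ) :
    bop If n hIn hnn (cst p) (cst q) = cst (Bf If n hIn hnn p q) := by
  funext t i
  show bh If n hIn hnn ((cst p ⊗ₘ cst q) (bhi If n hIn hnn t)) i = Bf If n hIn hnn p q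
  have h1 : (cst p ⊗ₘ cst q) (bhi If n hIn hnn t) = vec2 p q := rfl
  rw [h1]
  have h2 : i = z1 := Fin.ext (Nat.lt_one_iff.mp i.isLt)
  rw [h2]
  rfl

theorem bh_bijective : Function.Bijective (bh If n hIn hnn : Pt (2 : Mo) → Pt (1 : Mo)) := by
  constructor
  · intro x y h
    have := congrFun (bh_bhi If n hIn hnn) x
    have h2 := congrFun (bh_bhi If n hIn hnn) y
    show _ = _
    calc x = bhi If n hIn hnn (bh If n hIn hnn x) := this.symm
      _ = bhi If n hIn hnn (bh If n hIn hnn y) := by rw [h]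
      _ = y := h2
  · intro y
    exact ⟨bhi If n hIn hnn y, congrFun (bhi_bh If n hIn hnn) y⟩

theorem Bf_bijective : Function.Bijective (fun pq : ℕ × ℕ => Bf If n hIn hnn pq.1 pq.2) := by
  have hvec : Function.Bijective (fun pq : ℕ × ℕ => vec2 pq.1 pq.2) := by
    have : (fun pq : ℕ × ℕ => vec2 pq.1 pq.2) = ⇑(((Equiv.funUnique (Fin (1 : Mo)) ℕ).symm.prodCongr
        (Equiv.funUnique (Fin (1 : Mo)) ℕ).symm).trans (sp 1 1).symm) := by
      funext pq; rfl
    rw [this]; exact (Equiv.bijective _)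
  have hout : Function.Bijective (fun w : Pt (1 : Mo) => w z1) := by
    have : (fun w : Pt (1 : Mo) => w z1) = ⇑(Equiv.funUnique (Fin (1 : Mo)) ℕ) := by
      funext w
      show w z1 = w default
      congr 1
    rw [this]; exact Equiv.bijective _
  exact hout.comp ((bh_bijective If n hIn hnn).comp hvec)

end Split2

theorem Ef_map_one (c : (1 : Mo) ⟶ (1 : Mo)) : Ef.map c = c := rfl

theorem no_iso_2_0 (i : (2 : Mo) ≅ (0 : Mo)) : False := by
  have h1 : ∀ v : Pt (2 : Mo), i.inv (i.hom v) = v := fun v => congrFun i.hom_inv_id v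
  have h0 : i.hom (fun _ => 0) = i.hom (fun _ => 1) := Subsingleton.elim _ _
  have hv : (fun _ => 0 : Pt (2 : Mo)) = (fun _ => 1) := by
    calc (show Pt (2 : Mo) from fun _ => 0) = i.inv (i.hom (fun _ => 0)) := (h1 _).symm
      _ = i.inv (i.hom (fun _ => 1)) := by rw [h0]
      _ = (show Pt (2 : Mo) from fun _ => 1) := h1 _
  exact Nat.zero_ne_one (congrFun hv ⟨0, Nat.zero_lt_two⟩)

theorem no_split : ¬ ∃ (N : Type) (iN : Category.{0} N) (mN : @MonoidalCategory N iN),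
    @SplitsAt Mo _ _ Estrong N iN mN := by
  rintro ⟨N, iN, mN, strictN, R, I, hIR, hRI⟩
  letI : I.toFunctor.Monoidal := I.monoidal
  have hIRf : I.toFunctor ⋙ R.toFunctor = 𝟭 N := congrArg StrongMonoidalFunctor.toFunctor hIR
  have hRIf : R.toFunctor ⋙ I.toFunctor = Ef := congrArg StrongMonoidalFunctor.toFunctor hRI
  have hobj : ∀ x : N, R.toFunctor.obj (I.toFunctor.obj x) = x := fun x =>
    Functor.congr_obj hIRf x
  set n : N := R.toFunctor.obj (1 : Mo) with hn
  have hIn : I.toFunctor.obj n = (1 : Mo) := Functor.congr_obj hRIf (1 : Mo)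
  have hEI : ∀ x : N, I.toFunctor.obj x = Eobj (I.toFunctor.obj x) := fun x => by
    calc I.toFunctor.obj x
        = I.toFunctor.obj (R.toFunctor.obj (I.toFunctor.obj x)) := by rw [hobj]
      _ = Eobj (I.toFunctor.obj x) := Functor.congr_obj hRIf _
  have hIso2 : ((2 : Mo) ≅ I.toFunctor.obj (n ⊗ n)) :=
    (eqToIso (by rw [hIn]; rfl : (2 : Mo) = I.toFunctor.obj n ⊗ I.toFunctor.obj n)).trans
      (Functor.Monoidal.μIso I.toFunctor n n)
  have h1nn' : I.toFunctor.obj (n ⊗ n) = (1 : Mo) := by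
    have hEnn := hEI (n ⊗ n)
    obtain ⟨m, hm⟩ : ∃ m, I.toFunctor.obj (n ⊗ n) = m := ⟨_, rfl⟩
    rw [hm] at hEnn hIso2 ⊢
    cases m with
    | zero => exact (no_iso_2_0 hIso2).elim
    | succ k => exact hEnn
  have hnn : n ⊗ n = n := by
    conv_lhs => rw [← hobj (n ⊗ n)]
    rw [h1nn']
  obtain ⟨hα, hαhom⟩ := strictN.1 n n n
  have hP1 : ∀ c : (1 : Mo) ⟶ (1 : Mo),
      Phi I.toFunctor n hIn ((R.toFunctor.map c : n ⟶ n)) = c := by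
    intro c
    have hmap := Functor.congr_hom hRIf c
    unfold Phi
    rw [show I.toFunctor.map (R.toFunctor.map c) = (R.toFunctor ⋙ I.toFunctor).map c from rfl,
      hmap]
    simp only [Category.assoc, eqToHom_trans, eqToHom_trans_assoc]
    rfl
  have hBassoc : ∀ p q r : ℕ, Bf I.toFunctor n hIn hnn (Bf I.toFunctor n hIn hnn p q) r
      = Bf I.toFunctor n hIn hnn p (Bf I.toFunctor n hIn hnn q r) := by
    intro p q r
    have h := bop_assoc I.toFunctor n hIn hnn (fun c => R.toFunctor.map c) hP1 hα hαhom
      (cst p) (cst q) (cst r)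
    simp only [bop_cst] at h
    exact cst_inj h
  have hBbij := Bf_bijective I.toFunctor n hIn hnn
  have hkey : ∀ p q : ℕ, Bf I.toFunctor n hIn hnn p q = p := by
    intro p q
    have h2 := hBbij.1 (a₁ := (Bf I.toFunctor n hIn hnn p q, (0 : ℕ)))
      (a₂ := (p, Bf I.toFunctor n hIn hnn q 0)) (hBassoc p q 0)
    exact congrArg Prod.fst h2
  have h2 := hBbij.1 (a₁ := ((0 : ℕ), (0 : ℕ))) (a₂ := ((0 : ℕ), (1 : ℕ)))
    (by simp only []; rw [hkey 0 0, hkey 0 1])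
  exact Nat.zero_ne_one (congrArg Prod.snd h2)

end NSplit
/-- Idempotents need not split in the category of small strict monoidal categories and
strong monoidal functors: there is a small strict monoidal category `M` with an idempotent
strong monoidal endofunctor `E` admitting no splitting through any small strict monoidal
category. -/
theorem exists_nonsplit_monoidal_idempotent :
    ∃ (M : Type) (iM : Category.{0} M) (mM : @MonoidalCategory M iM),
      @MonoidalIsStrict M iM mM ∧
      ∃ E : @StrongMonoidalFunctor M M iM iM mM mM,
        @StrongMonoidalFunctor.comp M M M iM iM iM mM mM mM E E = E ∧
        ¬ ∃ (N : Type) (iN : Category.{0} N) (mN : @MonoidalCategory N iN),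
            @SplitsAt M iM mM E N iN mN := by
  exact ⟨NSplit.Mo, inferInstance, inferInstance, NSplit.Mo_strict, NSplit.Estrong,
    NSplit.E_idem, NSplit.no_split⟩
end

section
/- Let F : S ⥤ T be a functor that is bijective on objects, and let B be any category. Then the precomposition functor (T ⥤ B) ⥤ (S ⥤ B), sending G to F ⋙ G, is a discrete isofibration: for every functor G : T ⥤ B, every functor H : S ⥤ B, and every natural isomorphism ψ : H ≅ F ⋙ G, there exists a unique pair consisting of a functor G' : T ⥤ B with F ⋙ G' = H and a natural isomorphism Ψ : G' ≅ G whose whiskering along F equals ψ (i.e. Ψ.app (F.obj s) = ψ.app s for every object s of S). -/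
open CategoryTheory

universe v₁ v₂ v₃ u₁ u₂ u₃

private lemma natTrans_app_eq {S : Type u₁} [Category.{v₁} S] {B : Type u₃} [Category.{v₃} B]
    {H K : S ⥤ B} (f : H ⟶ K) {x y : S} (h : x = y) :
    f.app x = eqToHom (by rw [h]) ≫ f.app y ≫ eqToHom (by rw [h]) := by
  subst h; simp

/-- Precomposition with a bijective-on-objects functor is a discrete isofibration: every
natural isomorphism `ψ : H ≅ F ⋙ G` lifts uniquely to a natural isomorphism `Ψ : G' ≅ G`
with `F ⋙ G' = H` whose whiskering along `F` is `ψ`. -/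
theorem precomposition_bijective_on_objects_discrete_isofibration
    {S : Type u₁} [Category.{v₁} S] {T : Type u₂} [Category.{v₂} T]
    {B : Type u₃} [Category.{v₃} B]
    (F : S ⥤ T) (hF : Function.Bijective F.obj) :
    ∀ (G : T ⥤ B) (H : S ⥤ B) (ψ : H ≅ F ⋙ G),
      ∃! l : Σ G' : T ⥤ B, G' ≅ G,
        ∃ h : F ⋙ l.1 = H, ψ.hom = eqToHom h.symm ≫ Functor.whiskerLeft F l.2.hom := by
  intro G H ψ
  set e : S ≃ T := Equiv.ofBijective F.obj hF with he
  have heq : ∀ t : T, F.obj (e.symm t) = t := fun t => e.apply_symm_apply t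
  have heq' : ∀ s : S, e.symm (F.obj s) = s := fun s => e.symm_apply_apply s
  -- the lifted functor
  let G' : T ⥤ B :=
    { obj := fun t => H.obj (e.symm t)
      map := fun {t t'} f =>
        ψ.hom.app (e.symm t) ≫ eqToHom (congrArg G.obj (heq t)) ≫ G.map f ≫
          eqToHom (congrArg G.obj (heq t')).symm ≫ ψ.inv.app (e.symm t')
      map_id := by intro t; simp
      map_comp := by intro t t' t'' f g; simp }
  -- the lifted natural isomorphism
  let Ψ : G' ≅ G :=
    NatIso.ofComponents
      (fun t => ψ.app (e.symm t) ≪≫ eqToIso (congrArg G.obj (heq t)))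
      (by
        intro t t' f
        simp [G'])
  have key : ∀ {x s x' s' : S} (hx : x = s) (hx' : x' = s') (f : s ⟶ s'),
      ψ.hom.app x ≫ eqToHom (show G.obj (F.obj x) = G.obj (F.obj s) by rw [hx]) ≫
        G.map (F.map f) ≫ eqToHom (show G.obj (F.obj s') = G.obj (F.obj x') by rw [hx']) ≫
        ψ.inv.app x'
      = eqToHom (show H.obj x = H.obj s by rw [hx]) ≫ H.map f ≫
        eqToHom (show H.obj s' = H.obj x' by rw [hx']) := by
    intro x s x' s' hx hx' f
    subst hx; subst hx'
    simp only [eqToHom_refl, Category.comp_id, Category.id_comp]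
    have := ψ.hom.naturality f
    simp only [Functor.comp_map] at this
    rw [← Category.assoc, ← this, Category.assoc, Iso.hom_inv_id_app]
    simp
  have hcomp : F ⋙ G' = H := by
    refine CategoryTheory.Functor.ext (fun s => congrArg H.obj (heq' s)) ?_
    intro s s' f
    show ψ.hom.app (e.symm (F.obj s)) ≫ eqToHom (congrArg G.obj (heq (F.obj s))) ≫
        G.map (F.map f) ≫ eqToHom (congrArg G.obj (heq (F.obj s'))).symm ≫
        ψ.inv.app (e.symm (F.obj s')) = _
    rw [key (heq' s) (heq' s') f]
  refine ⟨⟨G', Ψ⟩, ⟨hcomp, ?_⟩, ?_⟩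
  · -- whiskering condition
    ext s
    simp only [NatTrans.comp_app, Functor.whiskerLeft_app, eqToHom_app, Ψ, NatIso.ofComponents_hom_app,
      Iso.trans_hom, eqToIso.hom, Iso.app_hom]
    rw [natTrans_app_eq ψ.hom (heq' s)]
    simp
  · -- uniqueness
    rintro ⟨G'', Ψ''⟩ ⟨h'', hw⟩
    dsimp only at h'' hw
    have happ : ∀ s : S, Ψ''.hom.app (F.obj s) = eqToHom (Functor.congr_obj h'' s) ≫ ψ.hom.app s := by
      intro s
      have := congrArg (fun τ => NatTrans.app τ s) hw
      simp only [NatTrans.comp_app, Functor.whiskerLeft_app, eqToHom_app] at this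
      rw [this]; simp
    have hobjeq : ∀ t : T, G''.obj t = G'.obj t := by
      intro t
      have h1 : G''.obj (F.obj (e.symm t)) = H.obj (e.symm t) :=
        Functor.congr_obj h'' (e.symm t)
      exact (congrArg G''.obj (heq t)).symm.trans h1
    have hGeq : G'' = G' := by
      refine CategoryTheory.Functor.ext hobjeq ?_
      intro t t' f
      have hnat := Ψ''.hom.naturality f
      have hGmap : G''.map f = Ψ''.hom.app t ≫ G.map f ≫ Ψ''.inv.app t' := by
        rw [← Category.assoc, ← hnat]; simp
      have hA := natTrans_app_eq Ψ''.hom (heq t).symm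
      have hB := natTrans_app_eq Ψ''.inv (heq t').symm
      have happ' : Ψ''.inv.app (F.obj (e.symm t')) = ψ.inv.app (e.symm t') ≫
          eqToHom (Functor.congr_obj h'' (e.symm t')).symm := by
        rw [← cancel_epi (Ψ''.hom.app (F.obj (e.symm t'))), Iso.hom_inv_id_app,
          happ (e.symm t')]
        simp
      rw [hGmap, hA, hB, happ (e.symm t), happ']
      show _ = eqToHom (hobjeq t) ≫ (ψ.hom.app (e.symm t) ≫ eqToHom (congrArg G.obj (heq t)) ≫
        G.map f ≫ eqToHom (congrArg G.obj (heq t')).symm ≫ ψ.inv.app (e.symm t')) ≫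
        eqToHom (hobjeq t').symm
      simp only [Category.assoc, eqToHom_trans, eqToHom_trans_assoc]
    subst hGeq
    have hiso : Ψ'' = Ψ := by
      ext t
      rw [natTrans_app_eq Ψ''.hom (heq t).symm, happ (e.symm t)]
      show _ = (ψ.app (e.symm t) ≪≫ eqToIso (congrArg G.obj (heq t))).hom
      simp only [Iso.trans_hom, eqToIso.hom, Iso.app_hom, Category.assoc, eqToHom_trans,
        eqToHom_trans_assoc]
      rw [natTrans_app_eq ψ.hom (rfl : e.symm t = e.symm t)]
      simp
    rw [hiso]
end

section
/- Let J be a filtered category and D : J ⥤ Cat a diagram of small categories such that each category D.obj j has a terminal object and each transition functor D.map φ preserves terminal objects. Then for any colimit cocone c of D in Cat, the category c.pt has a terminal object, and each cocone component functor c.ι.app j : D.obj j ⥤ c.pt preserves terminal objects. -/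
open CategoryTheory CategoryTheory.Limits

universe u

/-- A functor preserves terminal objects if it sends every terminal object to a terminal
object. -/
def PreservesTerminalObjs {A B : Type*} [Category A] [Category B] (F : A ⥤ B) : Prop :=
  ∀ X : A, IsTerminal X → Nonempty (IsTerminal (F.obj X))

section Aux

variable {J : Type u} [SmallCategory J] [IsFiltered J] {D : J ⥤ Cat.{u, u}}
variable (c : Cocone D)
variable {j₀ : J} {T₀ : D.obj j₀} (hT₀ : IsTerminal T₀)
variable (hM : ∀ {j k : J} (φ : j ⟶ k), PreservesTerminalObjs (D.map φ).toFunctor)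

noncomputable def θ {l : J} (χ : j₀ ⟶ l) : IsTerminal ((D.map χ).toFunctor.obj T₀) :=
  (hM χ T₀ hT₀).some

lemma objEq {j l : J} (ψ : j ⟶ l) (X : D.obj j) :
    (c.ι.app l).toFunctor.obj ((D.map ψ).toFunctor.obj X) = (c.ι.app j).toFunctor.obj X :=
  Functor.congr_obj (congrArg Cat.Hom.toFunctor (c.w ψ)) X

noncomputable def toT {j l : J} (ψ : j ⟶ l) (χ : j₀ ⟶ l) (X : D.obj j) :
    (c.ι.app j).toFunctor.obj X ⟶ (c.ι.app j₀).toFunctor.obj T₀ :=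
  eqToHom (objEq c ψ X).symm ≫
    (c.ι.app l).toFunctor.map ((θ hT₀ hM χ).from ((D.map ψ).toFunctor.obj X)) ≫ eqToHom (objEq c χ T₀)

lemma toT_ext {j l m : J} (ψ : j ⟶ l) (χ : j₀ ⟶ l) (u : l ⟶ m) (X : D.obj j) :
    toT c hT₀ hM (ψ ≫ u) (χ ≫ u) X = toT c hT₀ hM ψ χ X := by
  have hψ : (D.map (ψ ≫ u)).toFunctor.obj X = (D.map u).toFunctor.obj ((D.map ψ).toFunctor.obj X) :=
    Functor.congr_obj (congrArg Cat.Hom.toFunctor (D.map_comp ψ u)) X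
  have hχ : (D.map u).toFunctor.obj ((D.map χ).toFunctor.obj T₀) = (D.map (χ ≫ u)).toFunctor.obj T₀ :=
    (Functor.congr_obj (congrArg Cat.Hom.toFunctor (D.map_comp χ u)) T₀).symm
  have key : (θ hT₀ hM (χ ≫ u)).from ((D.map (ψ ≫ u)).toFunctor.obj X) =
      eqToHom hψ ≫ (D.map u).toFunctor.map ((θ hT₀ hM χ).from ((D.map ψ).toFunctor.obj X)) ≫ eqToHom hχ :=
    (θ hT₀ hM (χ ≫ u)).hom_ext _ _
  have hcw := Functor.congr_hom (congrArg Cat.Hom.toFunctor (c.w u)) ((θ hT₀ hM χ).from ((D.map ψ).toFunctor.obj X))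
  simp only [Cat.Hom.comp_toFunctor, Functor.comp_map] at hcw
  simp only [toT, key, Functor.map_comp, eqToHom_map, hcw]
  simp [eqToHom_trans]

lemma toT_indep {j l₁ l₂ : J} (ψ₁ : j ⟶ l₁) (χ₁ : j₀ ⟶ l₁) (ψ₂ : j ⟶ l₂) (χ₂ : j₀ ⟶ l₂)
    (X : D.obj j) : toT c hT₀ hM ψ₁ χ₁ X = toT c hT₀ hM ψ₂ χ₂ X := by
  obtain ⟨s, α, β, h1, h2⟩ := IsFiltered.bowtie ψ₁ ψ₂ χ₁ χ₂
  rw [← toT_ext c hT₀ hM ψ₁ χ₁ α, ← toT_ext c hT₀ hM ψ₂ χ₂ β, h1, h2]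

lemma toT_nat {j l : J} (ψ : j ⟶ l) (χ : j₀ ⟶ l) {X Y : D.obj j} (f : X ⟶ Y) :
    (c.ι.app j).toFunctor.map f ≫ toT c hT₀ hM ψ χ Y = toT c hT₀ hM ψ χ X := by
  have h := Functor.congr_hom (congrArg Cat.Hom.toFunctor (c.w ψ)).symm f
  simp only [Cat.Hom.comp_toFunctor, Functor.comp_map] at h
  have key : (D.map ψ).toFunctor.map f ≫ (θ hT₀ hM χ).from ((D.map ψ).toFunctor.obj Y) =
      (θ hT₀ hM χ).from ((D.map ψ).toFunctor.obj X) := (θ hT₀ hM χ).hom_ext _ _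
  simp only [toT, h]
  rw [← key, Functor.map_comp]
  simp only [Category.assoc, eqToHom_trans_assoc, eqToHom_refl, Category.id_comp]

lemma toT_comp {j k l : J} (φ : j ⟶ k) (ψ : k ⟶ l) (χ : j₀ ⟶ l) (X : D.obj j) :
    toT c hT₀ hM (φ ≫ ψ) χ X =
      eqToHom (objEq c φ X).symm ≫ toT c hT₀ hM ψ χ ((D.map φ).toFunctor.obj X) := by
  have hφψ : (D.map (φ ≫ ψ)).toFunctor.obj X = (D.map ψ).toFunctor.obj ((D.map φ).toFunctor.obj X) :=
    Functor.congr_obj (congrArg Cat.Hom.toFunctor (D.map_comp φ ψ)) X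
  have key : (θ hT₀ hM χ).from ((D.map (φ ≫ ψ)).toFunctor.obj X) =
      eqToHom hφψ ≫ (θ hT₀ hM χ).from ((D.map ψ).toFunctor.obj ((D.map φ).toFunctor.obj X)) :=
    (θ hT₀ hM χ).hom_ext _ _
  simp only [toT, key, Functor.map_comp, eqToHom_map, Category.assoc, eqToHom_trans_assoc]

noncomputable def alp (j : J) (X : D.obj j) : (c.ι.app j).toFunctor.obj X ⟶ (c.ι.app j₀).toFunctor.obj T₀ :=
  toT c hT₀ hM (IsFiltered.leftToMax j j₀) (IsFiltered.rightToMax j j₀) X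

lemma alp_nat (j : J) {X Y : D.obj j} (f : X ⟶ Y) :
    (c.ι.app j).toFunctor.map f ≫ alp c hT₀ hM j Y = alp c hT₀ hM j X :=
  toT_nat c hT₀ hM _ _ f

lemma alp_indep {j l : J} (ψ : j ⟶ l) (χ : j₀ ⟶ l) (X : D.obj j) :
    alp c hT₀ hM j X = toT c hT₀ hM ψ χ X :=
  toT_indep c hT₀ hM _ _ _ _ X

lemma alp_comp {j k : J} (φ : j ⟶ k) (X : D.obj j) :
    alp c hT₀ hM k ((D.map φ).toFunctor.obj X) = eqToHom (objEq c φ X) ≫ alp c hT₀ hM j X := by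
  rw [alp_indep c hT₀ hM (IsFiltered.leftToMax k j₀) (IsFiltered.rightToMax k j₀)
    ((D.map φ).toFunctor.obj X),
    alp_indep c hT₀ hM (φ ≫ IsFiltered.leftToMax k j₀) (IsFiltered.rightToMax k j₀) X,
    toT_comp]
  simp [eqToHom_trans]

lemma arrowMk_eq {C : Type*} [Category C] {a a' b : C} (h : a = a') (f : a ⟶ b) (g : a' ⟶ b)
    (hf : f = eqToHom h ≫ g) : Arrow.mk f = Arrow.mk g := by
  subst h; simp only [eqToHom_refl, Category.id_comp] at hf; rw [hf]

lemma arrowHom_eq {C : Type*} [Category C] {a b : Arrow C} (h : a = b) :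
    a.hom = eqToHom (by rw [h]) ≫ b.hom ≫ eqToHom (by rw [h]) := by
  subst h; simp

noncomputable def arr (j : J) : (D.obj j : Cat) ⥤ Arrow (c.pt : Cat) where
  obj X := Arrow.mk (alp c hT₀ hM j X)
  map {X Y} f := Arrow.homMk (u := (c.ι.app j).toFunctor.map f) (v := 𝟙 _)
    (by simp [alp_nat c hT₀ hM j f])
  map_id X := by apply CommaMorphism.ext <;> simp
  map_comp f g := by apply CommaMorphism.ext <;> simp

lemma arrow_eqToHom_left {C : Type*} [Category C] {a b : Arrow C} (h : a = b) :
    (eqToHom h).left = eqToHom (congrArg Comma.left h) := by subst h; rfl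

lemma arrow_eqToHom_right {C : Type*} [Category C] {a b : Arrow C} (h : a = b) :
    (eqToHom h).right = eqToHom (congrArg Comma.right h) := by subst h; rfl

lemma arr_w {j k : J} (φ : j ⟶ k) :
    (D.map φ).toFunctor ⋙ arr c hT₀ hM k = arr c hT₀ hM j := by
  apply CategoryTheory.Functor.ext
  · intro X Y f
    have hcw : (c.ι.app k).toFunctor.map ((D.map φ).toFunctor.map f) =
        eqToHom (objEq c φ X) ≫ (c.ι.app j).toFunctor.map f ≫ eqToHom (objEq c φ Y).symm := by
      have := Functor.congr_hom (congrArg Cat.Hom.toFunctor (c.w φ)) f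
      simpa [Cat.Hom.comp_toFunctor, Functor.comp_map] using this
    apply Arrow.hom_ext
    · rw [Arrow.comp_left, Arrow.comp_left, Arrow.eqToHom_left, Arrow.eqToHom_left]; simpa [arr] using hcw
    · rw [Arrow.comp_right, Arrow.comp_right, Arrow.eqToHom_right, Arrow.eqToHom_right]; simp [arr]
      exact (eqToHom_refl _ _).symm
  · intro X
    exact arrowMk_eq (objEq c φ X) _ _ (alp_comp c hT₀ hM φ X)

noncomputable def acocone : Cocone D where
  pt := Cat.of (Arrow (c.pt : Cat))
  ι :=
    { app := fun j => (arr c hT₀ hM j).toCatHom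
      naturality := fun j k φ => by
        apply Cat.ext; exact (arr_w c hT₀ hM φ).trans (Functor.comp_id _).symm }

end Aux

lemma master {J : Type u} [SmallCategory J] [IsFiltered J] {D : J ⥤ Cat.{u, u}}
    (c : Cocone D) (hc : IsColimit c) {j₀ : J} {T₀ : D.obj j₀} (hT₀ : IsTerminal T₀)
    (hM : ∀ {j k : J} (φ : j ⟶ k), PreservesTerminalObjs (D.map φ).toFunctor) :
    Nonempty (IsTerminal ((c.ι.app j₀).toFunctor.obj T₀)) := by
  classical
  set T' := (c.ι.app j₀).toFunctor.obj T₀ with hT'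
  let AC : Cocone D := acocone c hT₀ hM
  let A : c.pt ⟶ AC.pt := hc.desc AC
  have hfac : ∀ j, c.ι.app j ≫ A = (arr c hT₀ hM j).toCatHom := fun j => hc.fac AC j
  let L : AC.pt ⟶ c.pt := Arrow.leftFunc.toCatHom
  let R : AC.pt ⟶ c.pt := Arrow.rightFunc.toCatHom
  let K : c.pt ⟶ c.pt := ((Functor.const _).obj T').toCatHom
  have harrL : ∀ j, (arr c hT₀ hM j).toCatHom ≫ L = c.ι.app j := fun j => rfl
  have harrR : ∀ j, (arr c hT₀ hM j).toCatHom ≫ R = c.ι.app j ≫ K := fun j => rfl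
  have hL : A ≫ L = 𝟙 c.pt := by
    apply hc.hom_ext
    intro j
    rw [← Category.assoc, hfac j]
    exact (harrL j).trans (Category.comp_id _).symm
  have hR : A ≫ R = K := by
    apply hc.hom_ext
    intro j
    rw [← Category.assoc, hfac j]
    exact harrR j
  have e1 : ∀ X : c.pt, ((A.toFunctor.obj X).left : c.pt) = X := fun X => Functor.congr_obj (congrArg Cat.Hom.toFunctor hL) X
  have e2 : ∀ X : c.pt, ((A.toFunctor.obj X).right : c.pt) = T' := fun X => Functor.congr_obj (congrArg Cat.Hom.toFunctor hR) X
  let η : ∀ X : c.pt, (X : c.pt) ⟶ T' := fun X =>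
    eqToHom (e1 X).symm ≫ (A.toFunctor.obj X).hom ≫ eqToHom (e2 X)
  have ηnat : ∀ {X Y : c.pt} (f : X ⟶ Y), f ≫ η Y = η X := by
    intro X Y f
    have w := Arrow.w (A.toFunctor.map f)
    have hl : (A.toFunctor.map f).left = eqToHom (e1 X) ≫ f ≫ eqToHom (e1 Y).symm :=
      Functor.congr_hom (congrArg Cat.Hom.toFunctor hL) f
    have hr : (A.toFunctor.map f).right = eqToHom (e2 X) ≫ 𝟙 T' ≫ eqToHom (e2 Y).symm :=
      Functor.congr_hom (congrArg Cat.Hom.toFunctor hR) f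
    have h3 : eqToHom (e2 X) = (A.toFunctor.map f).right ≫ eqToHom (e2 Y) := by
      rw [hr]; simp
    show f ≫ eqToHom (e1 Y).symm ≫ (A.toFunctor.obj Y).hom ≫ eqToHom (e2 Y) =
      eqToHom (e1 X).symm ≫ (A.toFunctor.obj X).hom ≫ eqToHom (e2 X)
    rw [h3, ← Category.assoc ((A.toFunctor.obj X).hom), ← w, hl]
    simp
  -- η T' is an isomorphism
  have hAT : A.toFunctor.obj T' = (arr c hT₀ hM j₀).obj T₀ := Functor.congr_obj (congrArg Cat.Hom.toFunctor (hfac j₀)) T₀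
  have hhom : (A.toFunctor.obj T').hom =
      eqToHom (by rw [hAT]; rfl) ≫ alp c hT₀ hM j₀ T₀ ≫ eqToHom (by rw [hAT]; rfl) := by
    simpa [arr] using arrowHom_eq hAT
  have hiso : IsIso (η T') := by
    have hsrc : IsTerminal ((D.map (IsFiltered.leftToMax j₀ j₀)).toFunctor.obj T₀) :=
      (hM (IsFiltered.leftToMax j₀ j₀) T₀ hT₀).some
    haveI : IsIso ((θ hT₀ hM (IsFiltered.rightToMax j₀ j₀)).from
        ((D.map (IsFiltered.leftToMax j₀ j₀)).toFunctor.obj T₀)) := by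
      refine ⟨hsrc.from _, hsrc.hom_ext _ _, (θ hT₀ hM _).hom_ext _ _⟩
    show IsIso (eqToHom (e1 T').symm ≫ (A.toFunctor.obj T').hom ≫ eqToHom (e2 T'))
    rw [hhom]
    simp only [alp, toT]
    infer_instance
  have hTT : η T' = 𝟙 T' := by
    have hidem : η T' ≫ η T' = η T' := ηnat (η T')
    haveI := hiso
    exact (cancel_epi (η T')).mp (by rw [hidem, Category.comp_id])
  refine ⟨IsTerminal.ofUniqueHom η ?_⟩
  intro X f
  have := ηnat f
  rwa [hTT, Category.comp_id] at this

/-- Categories with a terminal object and terminal-object-preserving functors are closed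
under filtered colimits in `Cat`: the colimit of a filtered diagram of categories with
terminal objects, along terminal-object-preserving transition functors, has a terminal
object, and the colimit cocone components preserve terminal objects. -/
theorem terminal_objects_in_filtered_colimit_of_categories
    (J : Type u) [SmallCategory J] [IsFiltered J] (D : J ⥤ Cat.{u, u})
    (hT : ∀ j : J, ∃ T : D.obj j, Nonempty (IsTerminal T))
    (hM : ∀ {j k : J} (φ : j ⟶ k), PreservesTerminalObjs (D.map φ).toFunctor)
    (c : Cocone D) (hc : IsColimit c) :
    (∃ T : c.pt, Nonempty (IsTerminal T)) ∧
    ∀ j : J, PreservesTerminalObjs (c.ι.app j).toFunctor := by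
  constructor
  · obtain ⟨j₀⟩ := IsFiltered.nonempty (C := J)
    obtain ⟨T₀, ⟨hT₀⟩⟩ := hT j₀
    exact ⟨(c.ι.app j₀).toFunctor.obj T₀, master c hc hT₀ hM⟩
  · intro j X hX
    exact master c hc hX hM
end

section
/- Let F : A ⥤ B be a functor, let Iso(A) denote the category whose objects are the isomorphisms of A and whose morphisms are commutative squares between them, and let t : Iso(A) ⥤ P_F be the functor sending an isomorphism α : a ≅ a' to the object (a, F.obj a', F-image of α) of the iso-comma category P_F, and a square (u, u') to the morphism (u, F.map u'). Then F is an isofibration if and only if t is a surjective equivalence, i.e. both an equivalence of categories and an isofibration. -/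
open CategoryTheory CategoryTheory.Limits

universe v₁ v₂ u₁ u₂

variable {A : Type u₁} [Category.{v₁} A] {B : Type u₂} [Category.{v₂} B]

/-- The category `Iso(A)` of isomorphisms in `A`, with commutative squares as morphisms,
realised as the full subcategory of the arrow category on the invertible arrows. -/
abbrev IsoCat (A : Type u₁) [Category.{v₁} A] : Type _ :=
  ObjectProperty.FullSubcategory (fun f : Arrow A => IsIso f.hom)

/-- The comparison functor `t : Iso(A) ⥤ P_F`, sending an isomorphism `α : a ≅ a'` to the
object `(a, F.obj a', F.map α)` of the iso-comma category. -/
def tComparison (F : A ⥤ B) : IsoCat A ⥤ IsoComma F where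
  obj X := ⟨⟨X.obj.left, F.obj X.obj.right, F.map X.obj.hom⟩,
    by haveI : IsIso X.obj.hom := X.property; dsimp; infer_instance⟩
  map {X Y} f := ObjectProperty.homMk <| show (⟨X.obj.left, F.obj X.obj.right, F.map X.obj.hom⟩ : Comma F (𝟭 B)) ⟶
      ⟨Y.obj.left, F.obj Y.obj.right, F.map Y.obj.hom⟩ from
    { left := f.hom.left
      right := F.map f.hom.right
      w := by
        dsimp
        rw [← F.map_comp, ← F.map_comp]
        congr 1
        have := f.hom.w; first | exact this | exact this.symm | simpa using this | simpa using this.symm }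
  map_id X := by
    apply ObjectProperty.hom_ext
    apply CommaMorphism.ext
    · rfl
    · exact F.map_id _
  map_comp f g := by
    apply ObjectProperty.hom_ext
    apply CommaMorphism.ext
    · rfl
    · exact F.map_comp _ _

section Aux

variable {F : A ⥤ B}

lemma isoComma_eqToHom_left (F : A ⥤ B) {X Y : IsoComma F} (h : X = Y) :
    CommaMorphism.left (eqToHom h).hom = eqToHom (by rw [h]) := by subst h; rfl

lemma isoComma_eqToHom_right (F : A ⥤ B) {X Y : IsoComma F} (h : X = Y) :
    CommaMorphism.right (eqToHom h).hom = eqToHom (by rw [h]) := by subst h; rfl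

lemma isoComma_comp_left (F : A ⥤ B) {X Y Z : IsoComma F} (f : X ⟶ Y) (g : Y ⟶ Z) :
    CommaMorphism.left (f ≫ g).hom = CommaMorphism.left f.hom ≫ CommaMorphism.left g.hom := rfl

lemma isoComma_comp_right (F : A ⥤ B) {X Y Z : IsoComma F} (f : X ⟶ Y) (g : Y ⟶ Z) :
    CommaMorphism.right (f ≫ g).hom = CommaMorphism.right f.hom ≫ CommaMorphism.right g.hom := rfl

lemma isoComma_ext (F : A ⥤ B) {X Y : IsoComma F} (h1 : X.obj.left = Y.obj.left)
    (h2 : X.obj.right = Y.obj.right)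
    (h3 : X.obj.hom ≫ eqToHom h2 = eqToHom (congrArg F.obj h1) ≫ Y.obj.hom) : X = Y := by
  obtain ⟨⟨xl, xr, xh⟩, hx⟩ := X
  obtain ⟨⟨yl, yr, yh⟩, hy⟩ := Y
  dsimp at h1 h2 h3
  subst h1; subst h2
  simp at h3
  subst h3
  rfl

lemma tFaithful (F : A ⥤ B) : (tComparison F).Faithful where
  map_injective {X Y} f g hfg := by
    haveI : IsIso X.obj.hom := X.property
    have hl : f.hom.left = g.hom.left :=
      congrArg (fun k : (tComparison F).obj X ⟶ (tComparison F).obj Y => k.hom.left) hfg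
    have hwf := f.hom.w
    have hwg := g.hom.w
    apply ObjectProperty.hom_ext
    apply CommaMorphism.ext
    · exact hl
    · rw [← cancel_epi X.obj.hom, ← hwf, ← hwg, hl]

lemma tFull (F : A ⥤ B) : (tComparison F).Full where
  map_surjective {X Y} g := by
    haveI : IsIso X.obj.hom := X.property
    have hw := g.hom.w
    dsimp only [tComparison] at hw
    simp only [Functor.id_map] at hw
    refine ⟨ObjectProperty.homMk ⟨g.hom.left, inv X.obj.hom ≫ g.hom.left ≫ Y.obj.hom, by simp; rfl⟩, ?_⟩
    apply ObjectProperty.hom_ext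
    apply CommaMorphism.ext
    · rfl
    · show F.map (inv X.obj.hom ≫ g.hom.left ≫ Y.obj.hom) = g.hom.right
      rw [F.map_comp, F.map_inv]
      exact (IsIso.inv_comp_eq (F.map X.obj.hom)).2 ((F.map_comp _ _).trans hw)

/-- If `F` is an isofibration, `t` is surjective on objects. -/
lemma tSurjObj (hF : Isofibration F) (Y : IsoComma F) :
    ∃ X : IsoCat A, (tComparison F).obj X = Y := by
  haveI : IsIso Y.obj.hom := Y.property
  obtain ⟨a', α, h, hα⟩ := hF Y.obj.left Y.obj.right (asIso Y.obj.hom)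
  have hα' : F.map α.hom ≫ eqToHom h = Y.obj.hom := congrArg Iso.hom hα
  refine ⟨⟨Arrow.mk α.hom, inferInstanceAs (IsIso α.hom)⟩, ?_⟩
  exact isoComma_ext F rfl h (by exact hα'.trans (Category.id_comp _).symm)

lemma tIsofib (hF : Isofibration F) : Isofibration (tComparison F) := by
  intro X Y η
  haveI : IsIso X.obj.hom := X.property
  set u : X.obj.left ⟶ Y.obj.left := CommaMorphism.left η.hom.hom with hu
  set v : F.obj X.obj.right ⟶ Y.obj.right := CommaMorphism.right η.hom.hom with hv
  have huiso : IsIso u := by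
    refine ⟨CommaMorphism.left η.inv.hom, ?_, ?_⟩
    · exact congrArg (fun k => CommaMorphism.left k.hom) η.hom_inv_id
    · exact congrArg (fun k => CommaMorphism.left k.hom) η.inv_hom_id
  have hviso : IsIso v := by
    refine ⟨CommaMorphism.right η.inv.hom, ?_, ?_⟩
    · exact congrArg (fun k => CommaMorphism.right k.hom) η.hom_inv_id
    · exact congrArg (fun k => CommaMorphism.right k.hom) η.inv_hom_id
  have hw : F.map u ≫ Y.obj.hom = F.map X.obj.hom ≫ v := by
    have hw0 := CommaMorphism.w (X := ((tComparison F).obj X).obj) (Y := Y.obj) η.hom.hom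
    dsimp only [tComparison] at hw0
    simp only [Functor.id_map] at hw0
    rw [hu, hv]
    exact hw0
  obtain ⟨a₃, δ, h, hδ⟩ := hF X.obj.right Y.obj.right (asIso v)
  have hδ' : F.map δ.hom ≫ eqToHom h = v := congrArg Iso.hom hδ
  haveI : IsIso (inv u ≫ X.obj.hom ≫ δ.hom) := by infer_instance
  refine ⟨⟨Arrow.mk (inv u ≫ X.obj.hom ≫ δ.hom),
      inferInstanceAs (IsIso (inv u ≫ X.obj.hom ≫ δ.hom))⟩,
    { hom := ObjectProperty.homMk ⟨u, δ.hom, by simp⟩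
      inv := ObjectProperty.homMk ⟨inv u, δ.inv, by simp⟩
      hom_inv_id := by
        apply ObjectProperty.hom_ext
        apply CommaMorphism.ext
        · show u ≫ inv u = 𝟙 _; simp
        · show δ.hom ≫ δ.inv = 𝟙 _; simp
      inv_hom_id := by
        apply ObjectProperty.hom_ext
        apply CommaMorphism.ext
        · show inv u ≫ u = 𝟙 _; simp
        · show δ.inv ≫ δ.hom = 𝟙 _; simp },
    isoComma_ext F rfl h (by
      simp only [tComparison, eqToHom_refl, Category.id_comp]
      show F.map (inv u ≫ X.obj.hom ≫ δ.hom) ≫ eqToHom h = 𝟙 _ ≫ Y.obj.hom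
      rw [Category.id_comp, F.map_comp, F.map_comp, Category.assoc, Category.assoc, hδ', F.map_inv,
        IsIso.inv_comp_eq]
      exact hw.symm), ?_⟩
  apply Iso.ext
  simp only [Iso.trans_hom, Functor.mapIso_hom, eqToIso.hom]
  apply ObjectProperty.hom_ext
  apply CommaMorphism.ext
  · rw [isoComma_comp_left, isoComma_eqToHom_left]
    show u ≫ eqToHom _ = u
    exact Category.comp_id u
  · rw [isoComma_comp_right, isoComma_eqToHom_right]
    show F.map δ.hom ≫ eqToHom _ = v
    exact hδ'

lemma tEssSurjToIsofib (hEq : (tComparison F).IsEquivalence)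
    (hT : Isofibration (tComparison F)) : Isofibration F := by
  intro a b β
  haveI : IsIso β.hom := inferInstance
  set Y : IsoComma F := ⟨⟨a, b, β.hom⟩, inferInstanceAs (IsIso β.hom)⟩ with hY
  haveI := hEq
  haveI : (tComparison F).EssSurj := hEq.essSurj
  set X := (tComparison F).objPreimage Y with hX
  have η := (tComparison F).objObjPreimageIso Y
  obtain ⟨X', γ, hXY, -⟩ := hT X Y η
  haveI : IsIso X'.obj.hom := X'.property
  have h1 : X'.obj.left = a := congrArg (fun Z : IsoComma F => Z.obj.left) hXY
  have h2 : F.obj X'.obj.right = b := congrArg (fun Z : IsoComma F => Z.obj.right) hXY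
  have hw := CommaMorphism.w (eqToHom hXY).hom
  rw [isoComma_eqToHom_left F hXY, isoComma_eqToHom_right F hXY] at hw
  dsimp only [tComparison] at hw
  simp only [Functor.id_map] at hw
  have hm : F.map (eqToHom h1.symm) ≫ F.map (eqToHom h1) = 𝟙 (F.obj a) := by
    rw [← F.map_comp, eqToHom_trans, eqToHom_refl, F.map_id]
  -- hw : F.map (eqToHom h1) ≫ β.hom = F.map X'.obj.hom ≫ eqToHom h2
  refine ⟨X'.obj.right, eqToIso h1.symm ≪≫ asIso X'.obj.hom, h2, ?_⟩
  apply Iso.ext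
  simp only [Iso.trans_hom, Functor.mapIso_hom, eqToIso.hom, asIso_hom, F.map_comp]
  rw [Category.assoc]
  show F.map (eqToHom h1.symm) ≫ F.map X'.obj.hom ≫ eqToHom h2 = β.hom
  rw [← hw]
  exact (calc F.map (eqToHom h1.symm) ≫ F.map (eqToHom h1) ≫ β.hom
        = (F.map (eqToHom h1.symm) ≫ F.map (eqToHom h1)) ≫ β.hom := (Category.assoc _ _ _).symm
      _ = β.hom := by rw [hm, Category.id_comp])

end Aux

/-- A functor `F` is an isofibration if and only if the comparison functor
`t : Iso(A) ⥤ P_F` is a surjective equivalence, i.e. both an equivalence of categories and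
an isofibration. -/
theorem isofibration_iff_tComparison_surjective_equivalence (F : A ⥤ B) :
    Isofibration F ↔
      ((tComparison F).IsEquivalence ∧ Isofibration (tComparison F)) := by
  constructor
  · intro hF
    refine ⟨?_, tIsofib hF⟩
    haveI := tFaithful F
    haveI := tFull F
    haveI : (tComparison F).EssSurj :=
      ⟨fun Y => ⟨(tSurjObj hF Y).choose, ⟨eqToIso (tSurjObj hF Y).choose_spec⟩⟩⟩
    exact {}
  · rintro ⟨h1, h2⟩
    exact tEssSurjToIsofib h1 h2
end
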